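/- arXiv:2511.10331 — 8 statements merged into one kernel-verified Lean document; each statement's English description precedes it below -/
import Mathlib

section
/- Let X be a one-point metric space and let (X_n) be a sequence of finite positive definite metric spaces, each having exactly four points, converging to X in Gromov–Hausdorff distance (equivalently, diam X_n → 0). Then lim_{n→∞} |X_n| = 1 = |X|. -/
open Filter Metric

/-- The zeta (similarity) matrix of a finite metric space. -/
noncomputable def zetaM {α : Type*} [Fintype α] (M : MetricSpace α) : Matrix α α ℝ :=
  Matrix.of fun x y => Real.exp (-(M.toPseudoMetricSpace.toDist.dist x y))

/-- The magnitude of a finite (positive definite) metric space: the sum of the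
entries of the inverse of its zeta matrix. -/
noncomputable def magnitudeM {α : Type*} [Fintype α] (M : MetricSpace α) : ℝ := by
  classical exact ∑ x, ∑ y, (zetaM M)⁻¹ x y

/-- The Gromov–Hausdorff distance between two (nonempty compact) metric spaces,
with the metric structures given explicitly. -/
noncomputable def ghDistM {α β : Type*} (M : MetricSpace α) (N : MetricSpace β) : ℝ := by
  classical
  letI := M; letI := N
  exact if h : Nonempty α ∧ Nonempty β ∧ CompactSpace α ∧ CompactSpace β then
    @GromovHausdorff.ghDist α β M h.1 h.2.2.1 N h.2.1 h.2.2.2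
  else 0



open Matrix
/-- Weighted Cauchy-Schwarz for four terms. -/
lemma CS4 (l1 l2 l3 l4 v1 v2 v3 v4 : ℝ) (hl1 : 0 ≤ l1) (hl2 : 0 ≤ l2) (hl3 : 0 ≤ l3)
    (hl4 : 0 ≤ l4) :
    (l1*v1 + l2*v2 + l3*v3 + l4*v4)^2
      ≤ (l1 + l2 + l3 + l4) * (l1*v1^2 + l2*v2^2 + l3*v3^2 + l4*v4^2) := by
  nlinarith [mul_nonneg (mul_nonneg hl1 hl2) (sq_nonneg (v1 - v2)),
    mul_nonneg (mul_nonneg hl1 hl3) (sq_nonneg (v1 - v3)),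
    mul_nonneg (mul_nonneg hl1 hl4) (sq_nonneg (v1 - v4)),
    mul_nonneg (mul_nonneg hl2 hl3) (sq_nonneg (v2 - v3)),
    mul_nonneg (mul_nonneg hl2 hl4) (sq_nonneg (v2 - v4)),
    mul_nonneg (mul_nonneg hl3 hl4) (sq_nonneg (v3 - v4))]

/-- The key inequality, from a cut decomposition of a four-point semimetric. -/
lemma cut_bound (f12 f13 f14 f23 f24 f34 v1 v2 v3 v4 l1 l2 l3 l4 m1 m2 : ℝ)
    (hl1 : 0 ≤ l1) (hl2 : 0 ≤ l2) (hl3 : 0 ≤ l3) (hl4 : 0 ≤ l4)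
    (hm1 : 0 ≤ m1) (hm2 : 0 ≤ m2)
    (hv : v1 + v2 + v3 + v4 = 0)
    (e12 : f12 = l1 + l2 + m1 + m2) (e34 : f34 = l3 + l4 + m1 + m2)
    (e13 : f13 = l1 + l3 + m2) (e24 : f24 = l2 + l4 + m2)
    (e14 : f14 = l1 + l4 + m1) (e23 : f23 = l2 + l3 + m1) :
    ((f12+f13+f14)*v1 + (f12+f23+f24)*v2 + (f13+f23+f34)*v3 + (f14+f24+f34)*v4)^2
      ≤ (2*(f12+f13+f14+f23+f24+f34)) *
        (-(2*(f12*v1*v2 + f13*v1*v3 + f14*v1*v4 + f23*v2*v3 + f24*v2*v4 + f34*v3*v4))) := by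
  have hv4 : v4 = -v1 - v2 - v3 := by linarith
  subst hv4 e12 e34 e13 e24 e14 e23
  have key := CS4 l1 l2 l3 l4 v1 v2 v3 (-v1 - v2 - v3) hl1 hl2 hl3 hl4
  have hL : (0:ℝ) ≤ l1 + l2 + l3 + l4 := by linarith
  have hU : (0:ℝ) ≤ l1*v1^2 + l2*v2^2 + l3*v3^2 + l4*(-v1 - v2 - v3)^2 := by positivity
  have hp : (0:ℝ) ≤ (v1 + v3)^2 := sq_nonneg _
  have hr : (0:ℝ) ≤ (v2 + v3)^2 := sq_nonneg _
  linarith [key, mul_nonneg hL hU, mul_nonneg hm1 hU, mul_nonneg hm2 hU,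
    mul_nonneg hL (mul_nonneg hm1 hp), mul_nonneg hL (mul_nonneg hm2 hr),
    mul_nonneg hm1 (mul_nonneg hm1 hp), mul_nonneg hm2 (mul_nonneg hm2 hr),
    mul_nonneg hm1 (mul_nonneg hm2 hp), mul_nonneg hm1 (mul_nonneg hm2 hr)]

/-- metric triangle inequality for `1 - exp(-d)`. -/
lemma triF (a b c : ℝ) (ha : a ≤ 1) (hb : b ≤ 1) (h : a * b ≤ c) :
    1 - c ≤ (1 - a) + (1 - b) := by
  nlinarith [mul_nonneg (sub_nonneg.mpr ha) (sub_nonneg.mpr hb)]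

lemma tail_bound (s σ β t q : ℝ) (hlow : 1 ≤ s) (hσ0 : 0 ≤ σ) (hσβ : σ ≤ β) (hβ : β ≤ 4)
    (Ht : t = (s/4)*(16-σ) - 4) (Hq : q = (s/4)^2*(16-σ) - s) (hcut : t^2 ≤ σ * q) :
    s ≤ 1 + β := by
  have hao : s/4 * t = q := by linear_combination (s/4) * Ht - Hq
  rcases le_or_gt q 0 with hq | hq
  · have k1 : s*(16-σ) ≤ 16 := by nlinarith [Hq, hq, hlow]
    nlinarith [k1, hσ0, hσβ, hβ, hlow]
  · have e1 : q^2 ≤ (s/4)^2*(σ*q) := by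
      have h2 := mul_le_mul_of_nonneg_left hcut (sq_nonneg (s/4))
      calc q^2 = (s/4)^2 * t^2 := by rw [← hao]; ring
      _ ≤ (s/4)^2*(σ*q) := h2
    have k2 : q ≤ σ*(s/4)^2 := by nlinarith [e1, hq]
    have k3 : s*(16-2*σ) ≤ 16 := by nlinarith [Hq, k2, hlow]
    nlinarith [k3, hσ0, hσβ, hβ, hlow]


set_option maxHeartbeats 1000000 in
/-- Core arithmetic estimate for the magnitude of a four-point space. -/
lemma core (z01 z02 z03 z12 z13 z23 w0 w1 w2 w3 ε : ℝ)
    (hone01 : z01 ≤ 1) (hone02 : z02 ≤ 1) (hone03 : z03 ≤ 1)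
    (hone12 : z12 ≤ 1) (hone13 : z13 ≤ 1) (hone23 : z23 ≤ 1)
    (hlo01 : ε ≤ z01) (hlo02 : ε ≤ z02) (hlo03 : ε ≤ z03)
    (hlo12 : ε ≤ z12) (hlo13 : ε ≤ z13) (hlo23 : ε ≤ z23)
    (t012 : z01 * z12 ≤ z02) (t021 : z02 * z12 ≤ z01) (t102 : z01 * z02 ≤ z12)
    (t013 : z01 * z13 ≤ z03) (t031 : z03 * z13 ≤ z01) (t103 : z01 * z03 ≤ z13)
    (t023 : z02 * z23 ≤ z03) (t032 : z03 * z23 ≤ z02) (t203 : z02 * z03 ≤ z23)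
    (t123 : z12 * z23 ≤ z13) (t132 : z13 * z23 ≤ z12) (t213 : z12 * z13 ≤ z23)
    (h0 : w0 + z01*w1 + z02*w2 + z03*w3 = 1)
    (h1 : z01*w0 + w1 + z12*w2 + z13*w3 = 1)
    (h2 : z02*w0 + z12*w1 + w2 + z23*w3 = 1)
    (h3 : z03*w0 + z13*w1 + z23*w2 + w3 = 1)
    (hpsd0 : 0 ≤ (w0-1)^2 + w1^2 + w2^2 + w3^2
        + 2*(z01*(w0-1)*w1 + z02*(w0-1)*w2 + z03*(w0-1)*w3
            + z12*w1*w2 + z13*w1*w3 + z23*w2*w3))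
    (hsmall : 12*(1-ε) ≤ 4) :
    1 ≤ w0 + w1 + w2 + w3 ∧ w0 + w1 + w2 + w3 ≤ 1 + 12*(1-ε) := by
  set s : ℝ := w0 + w1 + w2 + w3 with hs
  have hQ0 : (w0-1)^2 + w1^2 + w2^2 + w3^2
        + 2*(z01*(w0-1)*w1 + z02*(w0-1)*w2 + z03*(w0-1)*w3
            + z12*w1*w2 + z13*w1*w3 + z23*w2*w3) = s - 1 := by
    linear_combination (w0 - 2) * h0 + w1 * h1 + w2 * h2 + w3 * h3
  have hlow : 1 ≤ s := by linarith
  refine ⟨hlow, ?_⟩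
  set σ : ℝ := 2*(6 - (z01+z02+z03+z12+z13+z23)) with hσ
  have hσ0 : 0 ≤ σ := by simp only [hσ]; linarith
  have hσε : σ ≤ 12*(1-ε) := by simp only [hσ]; linarith
  set v0 : ℝ := w0 - s/4 with hv0
  set v1 : ℝ := w1 - s/4 with hv1
  set v2 : ℝ := w2 - s/4 with hv2
  set v3 : ℝ := w3 - s/4 with hv3
  set f01 : ℝ := 1 - z01 with hf01
  set f02 : ℝ := 1 - z02 with hf02
  set f03 : ℝ := 1 - z03 with hf03
  set f12 : ℝ := 1 - z12 with hf12
  set f13 : ℝ := 1 - z13 with hf13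
  set f23 : ℝ := 1 - z23 with hf23
  set t : ℝ := (f01+f02+f03)*v0 + (f01+f12+f13)*v1 + (f02+f12+f23)*v2 + (f03+f13+f23)*v3
    with hts
  set q : ℝ := -(2*(f01*v0*v1 + f02*v0*v2 + f03*v0*v3 + f12*v1*v2 + f13*v1*v3 + f23*v2*v3))
    with hqs
  have Ht : t = (s/4)*(16-σ) - 4 := by
    simp only [hts, hσ, hv0, hv1, hv2, hv3, hf01, hf02, hf03, hf12, hf13, hf23, hs]
    linear_combination (-1 : ℝ) * h0 - h1 - h2 - h3
  have Hq : q = (s/4)^2*(16-σ) - s := by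
    simp only [hqs, hσ, hv0, hv1, hv2, hv3, hf01, hf02, hf03, hf12, hf13, hf23, hs]
    linear_combination (w0 - s/2) * h0 + (w1 - s/2) * h1 + (w2 - s/2) * h2 + (w3 - s/2) * h3
  have hcut : t^2 ≤ σ * q := by
    have hSv : v0 + v1 + v2 + v3 = 0 := by
      simp only [hv0, hv1, hv2, hv3, hs]; ring
    have F01_2 : f01 ≤ f02 + f12 := by
      rw [hf01, hf02, hf12]; exact triF _ _ _ hone02 hone12 t021
    have F01_3 : f01 ≤ f03 + f13 := by
      rw [hf01, hf03, hf13]; exact triF _ _ _ hone03 hone13 t031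
    have F02_1 : f02 ≤ f01 + f12 := by
      rw [hf02, hf01, hf12]; exact triF _ _ _ hone01 hone12 t012
    have F02_3 : f02 ≤ f03 + f23 := by
      rw [hf02, hf03, hf23]; exact triF _ _ _ hone03 hone23 t032
    have F03_1 : f03 ≤ f01 + f13 := by
      rw [hf03, hf01, hf13]; exact triF _ _ _ hone01 hone13 t013
    have F03_2 : f03 ≤ f02 + f23 := by
      rw [hf03, hf02, hf23]; exact triF _ _ _ hone02 hone23 t023
    have F12_0 : f12 ≤ f01 + f02 := by
      rw [hf12, hf01, hf02]; exact triF _ _ _ hone01 hone02 t102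
    have F12_3 : f12 ≤ f13 + f23 := by
      rw [hf12, hf13, hf23]; exact triF _ _ _ hone13 hone23 t132
    have F13_0 : f13 ≤ f01 + f03 := by
      rw [hf13, hf01, hf03]; exact triF _ _ _ hone01 hone03 t103
    have F13_2 : f13 ≤ f12 + f23 := by
      rw [hf13, hf12, hf23]; exact triF _ _ _ hone12 hone23 t123
    have F23_0 : f23 ≤ f02 + f03 := by
      rw [hf23, hf02, hf03]; exact triF _ _ _ hone02 hone03 t203
    have F23_1 : f23 ≤ f12 + f13 := by
      rw [hf23, hf12, hf13]; exact triF _ _ _ hone12 hone13 t213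
    have hσq : σ = 2*(f01+f02+f03+f12+f13+f23) := by
      simp only [hσ, hf01, hf02, hf03, hf12, hf13, hf23]; ring
    rw [hts, hqs, hσq]
    rcases le_total (f02 + f13) (f01 + f23) with hA | hA
    · rcases le_total (f03 + f12) (f01 + f23) with hB | hB
      · have H := cut_bound f01 f02 f03 f12 f13 f23 v0 v1 v2 v3
          ((f02 + f03 - f23)/2) ((f12 + f13 - f23)/2)
          ((f02 + f12 - f01)/2) ((f03 + f13 - f01)/2)
          ((f01 + f23 - f02 - f13)/2) ((f01 + f23 - f03 - f12)/2)
          (by linarith) (by linarith) (by linarith) (by linarith)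
          (by linarith) (by linarith) hSv
          (by ring) (by ring) (by ring) (by ring) (by ring) (by ring)
        calc ((f01+f02+f03)*v0 + (f01+f12+f13)*v1 + (f02+f12+f23)*v2 + (f03+f13+f23)*v3)^2
            = ((f01+f02+f03)*v0 + (f01+f12+f13)*v1 + (f02+f12+f23)*v2 + (f03+f13+f23)*v3)^2 := by
              ring
        _ ≤ (2*(f01+f02+f03+f12+f13+f23)) *
            (-(2*(f01*v0*v1 + f02*v0*v2 + f03*v0*v3 + f12*v1*v2 + f13*v1*v3 + f23*v2*v3))) := H
        _ = (2*(f01+f02+f03+f12+f13+f23)) *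
            (-(2*(f01*v0*v1 + f02*v0*v2 + f03*v0*v3 + f12*v1*v2 + f13*v1*v3 + f23*v2*v3))) := by
              ring
      · have H := cut_bound f03 f01 f02 f13 f23 f12 v0 v3 v1 v2
          ((f01 + f02 - f12)/2) ((f13 + f23 - f12)/2)
          ((f01 + f13 - f03)/2) ((f02 + f23 - f03)/2)
          ((f03 + f12 - f01 - f23)/2) ((f03 + f12 - f02 - f13)/2)
          (by linarith) (by linarith) (by linarith) (by linarith)
          (by linarith) (by linarith) (by linarith)
          (by ring) (by ring) (by ring) (by ring) (by ring) (by ring)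
        calc ((f01+f02+f03)*v0 + (f01+f12+f13)*v1 + (f02+f12+f23)*v2 + (f03+f13+f23)*v3)^2
            = ((f03+f01+f02)*v0 + (f03+f13+f23)*v3 + (f01+f13+f12)*v1 + (f02+f23+f12)*v2)^2 := by
              ring
        _ ≤ (2*(f03+f01+f02+f13+f23+f12)) *
            (-(2*(f03*v0*v3 + f01*v0*v1 + f02*v0*v2 + f13*v3*v1 + f23*v3*v2 + f12*v1*v2))) := H
        _ = (2*(f01+f02+f03+f12+f13+f23)) *
            (-(2*(f01*v0*v1 + f02*v0*v2 + f03*v0*v3 + f12*v1*v2 + f13*v1*v3 + f23*v2*v3))) := by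
              ring
    · rcases le_total (f03 + f12) (f02 + f13) with hB | hB
      · have H := cut_bound f02 f01 f03 f12 f23 f13 v0 v2 v1 v3
          ((f01 + f03 - f13)/2) ((f12 + f23 - f13)/2)
          ((f01 + f12 - f02)/2) ((f03 + f23 - f02)/2)
          ((f02 + f13 - f01 - f23)/2) ((f02 + f13 - f03 - f12)/2)
          (by linarith) (by linarith) (by linarith) (by linarith)
          (by linarith) (by linarith) (by linarith)
          (by ring) (by ring) (by ring) (by ring) (by ring) (by ring)
        calc ((f01+f02+f03)*v0 + (f01+f12+f13)*v1 + (f02+f12+f23)*v2 + (f03+f13+f23)*v3)^2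
            = ((f02+f01+f03)*v0 + (f02+f12+f23)*v2 + (f01+f12+f13)*v1 + (f03+f23+f13)*v3)^2 := by
              ring
        _ ≤ (2*(f02+f01+f03+f12+f23+f13)) *
            (-(2*(f02*v0*v2 + f01*v0*v1 + f03*v0*v3 + f12*v2*v1 + f23*v2*v3 + f13*v1*v3))) := H
        _ = (2*(f01+f02+f03+f12+f13+f23)) *
            (-(2*(f01*v0*v1 + f02*v0*v2 + f03*v0*v3 + f12*v1*v2 + f13*v1*v3 + f23*v2*v3))) := by
              ring
      · have H := cut_bound f03 f01 f02 f13 f23 f12 v0 v3 v1 v2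
          ((f01 + f02 - f12)/2) ((f13 + f23 - f12)/2)
          ((f01 + f13 - f03)/2) ((f02 + f23 - f03)/2)
          ((f03 + f12 - f01 - f23)/2) ((f03 + f12 - f02 - f13)/2)
          (by linarith) (by linarith) (by linarith) (by linarith)
          (by linarith) (by linarith) (by linarith)
          (by ring) (by ring) (by ring) (by ring) (by ring) (by ring)
        calc ((f01+f02+f03)*v0 + (f01+f12+f13)*v1 + (f02+f12+f23)*v2 + (f03+f13+f23)*v3)^2
            = ((f03+f01+f02)*v0 + (f03+f13+f23)*v3 + (f01+f13+f12)*v1 + (f02+f23+f12)*v2)^2 := by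
              ring
        _ ≤ (2*(f03+f01+f02+f13+f23+f12)) *
            (-(2*(f03*v0*v3 + f01*v0*v1 + f02*v0*v2 + f13*v3*v1 + f23*v3*v2 + f12*v1*v2))) := H
        _ = (2*(f01+f02+f03+f12+f13+f23)) *
            (-(2*(f01*v0*v1 + f02*v0*v2 + f03*v0*v3 + f12*v1*v2 + f13*v1*v3 + f23*v2*v3))) := by
              ring
  exact tail_bound s σ (12*(1-ε)) t q hlow hσ0 hσε hsmall Ht Hq hcut

lemma magpunit : magnitudeM (inferInstance : MetricSpace PUnit) = 1 := by
  have hz : zetaM (inferInstance : MetricSpace PUnit) = 1 := by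
    ext x y
    have : x = y := Subsingleton.elim x y
    subst this
    simp [zetaM, Matrix.one_apply]
  unfold magnitudeM
  rw [hz]
  simp [inv_one, Matrix.one_apply]


universe u v

lemma dist_le_two_gh {α : Type u} [Fintype α] [Nonempty α] (M : MetricSpace α) (x y : α) :
    dist x y ≤ 2 * ghDistM M (inferInstance : MetricSpace PUnit.{v+1}) := by
  classical
  letI := M
  haveI : Finite α := Finite.of_fintype α
  haveI : CompactSpace α := inferInstance
  have hcond : Nonempty α ∧ Nonempty PUnit.{v+1} ∧ CompactSpace α ∧ CompactSpace PUnit.{v+1} :=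
    ⟨‹_›, ⟨PUnit.unit⟩, ‹_›, inferInstance⟩
  have hgh : ghDistM M (inferInstance : MetricSpace PUnit.{v+1})
      = GromovHausdorff.ghDist α PUnit.{v+1} := by
    unfold ghDistM
    rw [dif_pos hcond]
  rw [hgh]
  obtain ⟨Φ, Ψ, hΦ, hΨ, hd⟩ := GromovHausdorff.ghDist_eq_hausdorffDist α PUnit.{v+1}
  have hbdd : EMetric.hausdorffEdist (Set.range Φ) (Set.range Ψ) ≠ ⊤ := by
    apply Metric.hausdorffEdist_ne_top_of_nonempty_of_bounded
    · exact Set.range_nonempty _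
    · exact Set.range_nonempty _
    · exact (isCompact_range hΦ.continuous).isBounded
    · exact (isCompact_range hΨ.continuous).isBounded
  have hx : Metric.infDist (Φ x) (Set.range Ψ) ≤
      Metric.hausdorffDist (Set.range Φ) (Set.range Ψ) :=
    Metric.infDist_le_hausdorffDist_of_mem (Set.mem_range_self x) hbdd
  have hy : Metric.infDist (Φ y) (Set.range Ψ) ≤
      Metric.hausdorffDist (Set.range Φ) (Set.range Ψ) :=
    Metric.infDist_le_hausdorffDist_of_mem (Set.mem_range_self y) hbdd
  have hrange : Set.range Ψ = {Ψ PUnit.unit} := by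
    ext p
    simp only [Set.mem_range, Set.mem_singleton_iff]
    exact ⟨fun ⟨u, h⟩ => by cases u; exact h.symm, fun h => ⟨PUnit.unit, h.symm⟩⟩
  rw [hrange] at hx hy hd
  rw [Metric.infDist_singleton] at hx hy
  calc dist x y = dist (Φ x) (Φ y) := (hΦ.dist_eq x y).symm
  _ ≤ dist (Φ x) (Ψ PUnit.unit) + dist (Ψ PUnit.unit) (Φ y) := dist_triangle _ _ _
  _ = dist (Φ x) (Ψ PUnit.unit) + dist (Φ y) (Ψ PUnit.unit) := by rw [dist_comm (Ψ PUnit.unit)]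
  _ ≤ 2 * GromovHausdorff.ghDist α PUnit.{v+1} := by rw [hd]; linarith

/-- The two-sided bound on the magnitude of a positive definite four-point space. -/
lemma mag_bounds {α : Type*} [Fintype α] (M : MetricSpace α)
    (hcard : Fintype.card α = 4) (hpd : (zetaM M).PosDef) (δ : ℝ)
    (hδ : ∀ x y : α, M.toPseudoMetricSpace.toDist.dist x y ≤ δ)
    (hsmall : 12*(1 - Real.exp (-δ)) ≤ 4) :
    1 ≤ magnitudeM M ∧ magnitudeM M ≤ 1 + 12*(1 - Real.exp (-δ)) := by
  classical
  letI := M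
  set Z := zetaM M with hZ
  obtain ⟨e⟩ : Nonempty (Fin 4 ≃ α) := by
    rw [← Fintype.card_eq, Fintype.card_fin, hcard]
  have hsum : ∀ g : α → ℝ, ∑ x, g x = g (e 0) + g (e 1) + g (e 2) + g (e 3) := by
    intro g
    rw [← Equiv.sum_comp e g, Fin.sum_univ_four]
  have hdet : IsUnit Z.det := hpd.det_pos.ne'.isUnit
  set w : α → ℝ := Z⁻¹ *ᵥ (fun _ => 1) with hw
  have hZw : Z *ᵥ w = fun _ => 1 := by
    rw [hw, Matrix.mulVec_mulVec, Matrix.mul_nonsing_inv _ hdet, Matrix.one_mulVec]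
  have hmag : magnitudeM M = ∑ x, w x := by
    unfold magnitudeM
    apply Finset.sum_congr rfl
    intro x _
    rw [hw]
    simp [Matrix.mulVec, dotProduct, hZ]
  -- coordinates
  set d : Fin 4 → Fin 4 → ℝ := fun i j => M.toPseudoMetricSpace.toDist.dist (e i) (e j) with hd
  have hZe : ∀ i j, Z (e i) (e j) = Real.exp (-(d i j)) := by
    intro i j; rw [hZ, hd]; rfl
  have hrow : ∀ i : Fin 4,
      Real.exp (-(d i 0)) * w (e 0) + Real.exp (-(d i 1)) * w (e 1)
        + Real.exp (-(d i 2)) * w (e 2) + Real.exp (-(d i 3)) * w (e 3) = 1 := by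
    intro i
    have := congrFun hZw (e i)
    simp only [Matrix.mulVec, dotProduct] at this
    rw [hsum (fun y => Z (e i) y * w y)] at this
    simpa only [hZe] using this
  have hdsymm : ∀ i j, d i j = d j i := fun i j => dist_comm _ _
  have hdself : ∀ i, d i i = 0 := fun i => dist_self _
  -- the quadratic form hypothesis
  have hpsd := hpd.posSemidef.dotProduct_mulVec_nonneg (fun x => w x - (if x = e 0 then 1 else 0))
  rw [show (star fun x => w x - (if x = e 0 then 1 else 0))
      = (fun x => w x - (if x = e 0 then 1 else 0)) from rfl] at hpsd
  simp only [dotProduct, Matrix.mulVec] at hpsd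
  rw [hsum (fun x => (w x - if x = e 0 then 1 else 0) *
      ∑ y, Z x y * (w y - if y = e 0 then 1 else 0))] at hpsd
  rw [hsum (fun y => Z (e 0) y * (w y - if y = e 0 then 1 else 0)),
      hsum (fun y => Z (e 1) y * (w y - if y = e 0 then 1 else 0)),
      hsum (fun y => Z (e 2) y * (w y - if y = e 0 then 1 else 0)),
      hsum (fun y => Z (e 3) y * (w y - if y = e 0 then 1 else 0))] at hpsd
  have hif0 : (if e 0 = e 0 then (1:ℝ) else 0) = 1 := if_pos rfl
  have hif : ∀ i : Fin 4, i ≠ 0 → (if e i = e 0 then (1:ℝ) else 0) = 0 := by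
    intro i hi
    exact if_neg (fun h => hi (e.injective h))
  rw [hif0, hif 1 (by decide), hif 2 (by decide), hif 3 (by decide)] at hpsd
  simp only [hZe] at hpsd
  -- apply the core estimate
  rw [hmag, hsum w]
  have hexp_le_one : ∀ i j : Fin 4, Real.exp (-(d i j)) ≤ 1 := by
    intro i j
    rw [← Real.exp_zero]
    exact Real.exp_le_exp.mpr (by simpa using (show 0 ≤ d i j from dist_nonneg))
  have hexp_lo : ∀ i j : Fin 4, Real.exp (-δ) ≤ Real.exp (-(d i j)) := by
    intro i j
    exact Real.exp_le_exp.mpr (by simpa using hδ (e i) (e j))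
  have htri : ∀ i j k : Fin 4, Real.exp (-(d i j)) * Real.exp (-(d j k)) ≤ Real.exp (-(d i k)) := by
    intro i j k
    rw [← Real.exp_add]
    apply Real.exp_le_exp.mpr
    have := dist_triangle (e i) (e j) (e k)
    simp only [hd]
    linarith
  have h0 := hrow 0; have h1 := hrow 1; have h2 := hrow 2; have h3 := hrow 3
  rw [hdself 0] at h0; rw [hdself 1] at h1; rw [hdself 2] at h2; rw [hdself 3] at h3
  rw [show (-(0:ℝ)) = 0 by ring, Real.exp_zero] at h0 h1 h2 h3
  rw [hdsymm 1 0] at h1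
  rw [hdsymm 2 0, hdsymm 2 1] at h2
  rw [hdsymm 3 0, hdsymm 3 1, hdsymm 3 2] at h3
  have H := core (Real.exp (-(d 0 1))) (Real.exp (-(d 0 2))) (Real.exp (-(d 0 3)))
      (Real.exp (-(d 1 2))) (Real.exp (-(d 1 3))) (Real.exp (-(d 2 3)))
      (w (e 0)) (w (e 1)) (w (e 2)) (w (e 3)) (Real.exp (-δ))
      (hexp_le_one 0 1) (hexp_le_one 0 2) (hexp_le_one 0 3)
      (hexp_le_one 1 2) (hexp_le_one 1 3) (hexp_le_one 2 3)
      (hexp_lo 0 1) (hexp_lo 0 2) (hexp_lo 0 3)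
      (hexp_lo 1 2) (hexp_lo 1 3) (hexp_lo 2 3)
      (htri 0 1 2)
      (by have h := htri 0 2 1; rwa [hdsymm 2 1] at h)
      (by have h := htri 1 0 2; rwa [hdsymm 1 0] at h)
      (htri 0 1 3)
      (by have h := htri 0 3 1; rwa [hdsymm 3 1] at h)
      (by have h := htri 1 0 3; rwa [hdsymm 1 0] at h)
      (htri 0 2 3)
      (by have h := htri 0 3 2; rwa [hdsymm 3 2] at h)
      (by have h := htri 2 0 3; rwa [hdsymm 2 0] at h)
      (htri 1 2 3)
      (by have h := htri 1 3 2; rwa [hdsymm 3 2] at h)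
      (by have h := htri 2 1 3; rwa [hdsymm 2 1] at h)
      (by linarith [h0]) (by linarith [h1]) (by linarith [h2]) (by linarith [h3])
      (by
        rw [hdself 0, hdself 1, hdself 2, hdself 3, hdsymm 1 0, hdsymm 2 0, hdsymm 2 1,
          hdsymm 3 0, hdsymm 3 1, hdsymm 3 2] at hpsd
        rw [show (-(0:ℝ)) = 0 by ring, Real.exp_zero] at hpsd
        linarith [hpsd])
      hsmall
  exact H

/-- If `X` is a one-point metric space (modelled by `PUnit`) and `(X_n)` is a sequence of
finite positive definite metric spaces, each with exactly four points, converging to `X`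
in Gromov–Hausdorff distance, then `|X_n| → 1 = |X|`. -/
theorem magnitude_tendsto_one_of_four_points
    (Xn : ℕ → Type*) [∀ n, Fintype (Xn n)] [∀ n, Nonempty (Xn n)]
    (Mn : ∀ n, MetricSpace (Xn n))
    (hcard : ∀ n, Fintype.card (Xn n) = 4)
    (hpd : ∀ n, (zetaM (Mn n)).PosDef)
    (hGH : Tendsto (fun n => ghDistM (Mn n) (inferInstance : MetricSpace PUnit))
      atTop (nhds 0)) :
    Tendsto (fun n => magnitudeM (Mn n)) atTop (nhds 1) ∧
      magnitudeM (inferInstance : MetricSpace PUnit) = 1 := by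
  refine ⟨?_, magpunit⟩
  set g : ℕ → ℝ := fun n => ghDistM (Mn n) (inferInstance : MetricSpace PUnit) with hg
  have hc : Continuous (fun t : ℝ => 1 + 12*(1 - Real.exp (-(2*t)))) := by continuity
  have hU : Tendsto (fun n => 1 + 12*(1 - Real.exp (-(2 * g n)))) atTop (nhds 1) := by
    have := (hc.tendsto 0).comp hGH
    simpa [Function.comp_def] using this
  have hsmall_ev : ∀ᶠ n in atTop, 12*(1 - Real.exp (-(2 * g n))) ≤ 4 := by
    have h4 : Tendsto (fun n => 12*(1 - Real.exp (-(2 * g n)))) atTop (nhds 0) := by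
      have hc2 : Continuous (fun t : ℝ => 12*(1 - Real.exp (-(2*t)))) := by continuity
      have := (hc2.tendsto 0).comp hGH
      simpa [Function.comp_def] using this
    exact (h4.eventually_lt_const (by norm_num : (0:ℝ) < 4)).mono fun n h => le_of_lt h
  have hbounds : ∀ᶠ n in atTop, 1 ≤ magnitudeM (Mn n) ∧
      magnitudeM (Mn n) ≤ 1 + 12*(1 - Real.exp (-(2 * g n))) := by
    filter_upwards [hsmall_ev] with n hsm
    exact mag_bounds (Mn n) (hcard n) (hpd n) (2 * g n)
      (fun x y => dist_le_two_gh (Mn n) x y) hsm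
  exact tendsto_of_tendsto_of_tendsto_of_le_of_le' tendsto_const_nhds hU
    (hbounds.mono fun n h => h.1) (hbounds.mono fun n h => h.2)
end

section
/- Let y₁,…,y_k be linearly independent unit vectors in ℝ^k and let G = (yᵢ·yⱼ)_{1≤i,j≤k} be their Gram matrix. Then the points y₁,…,y_k are affinely independent, their circumradius ρ (the radius of the unique sphere in the affine span of {y₁,…,y_k} passing through all of them) satisfies ρ < 1, and the sum of all entries of the inverse matrix G⁻¹ equals 1/(1−ρ²). -/
open Metric

noncomputable section

/-- A point `c` and a radius `ρ` form a circumsphere of the set `Y` if `c` lies in the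
affine span of `Y` and every point of `Y` is at distance `ρ` from `c`. -/
def IsCircum {E : Type*} [NormedAddCommGroup E] [InnerProductSpace ℝ E]
    (Y : Set E) (c : E) (ρ : ℝ) : Prop :=
  c ∈ affineSpan ℝ Y ∧ ∀ y ∈ Y, dist c y = ρ

open Classical in
/-- The circumcenter and circumradius of a subset of a Euclidean space (junk value if no
circumsphere exists). -/
noncomputable def circumData {E : Type*} [NormedAddCommGroup E] [InnerProductSpace ℝ E]
    (Y : Set E) : E × ℝ :=
  if h : ∃ p : E × ℝ, IsCircum Y p.1 p.2 ∧ 0 ≤ p.2 then h.choose else (0, 0)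

/-- The circumradius of a subset of a Euclidean space. -/
noncomputable def circumradius {E : Type*} [NormedAddCommGroup E] [InnerProductSpace ℝ E]
    (Y : Set E) : ℝ := (circumData Y).2

/-- If `y₁,…,y_k` are linearly independent unit vectors in `ℝ^k` and `G` is their Gram
matrix, then the points `y₁,…,y_k` are affinely independent, they have a unique
circumsphere, the circumradius `ρ` satisfies `ρ < 1`, and the sum of the entries of
`G⁻¹` equals `1/(1−ρ²)`. -/
theorem gram_inv_sum_eq_one_div_one_sub_circumradius_sq
    (k : ℕ) (hk : 0 < k) (y : Fin k → EuclideanSpace ℝ (Fin k))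
    (hunit : ∀ i, ‖y i‖ = 1) (hli : LinearIndependent ℝ y) :
    AffineIndependent ℝ y ∧
    (∃! p : (EuclideanSpace ℝ (Fin k)) × ℝ, IsCircum (Set.range y) p.1 p.2 ∧ 0 ≤ p.2) ∧
    circumradius (Set.range y) < 1 ∧
    ∑ i, ∑ j, (Matrix.of fun i j : Fin k => (inner ℝ (y i) (y j) : ℝ))⁻¹ i j
      = 1 / (1 - circumradius (Set.range y) ^ 2) := by
  classical
  have hne : Nonempty (Fin k) := ⟨⟨0, hk⟩⟩
  -- affine independence
  have haff : AffineIndependent ℝ y := by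
    rw [affineIndependent_iff]
    intro s w _ h
    exact linearIndependent_iff'.1 hli s w h
  -- unique circumsphere
  obtain ⟨cs, ⟨hcs_mem, hcs_sub⟩, hcs_uniq⟩ := haff.existsUnique_dist_eq
  have hdist : ∀ i, dist cs.center (y i) = cs.radius := fun i => by
    have := EuclideanGeometry.Sphere.mem_coe.1 (hcs_sub ⟨i, rfl⟩)
    rw [EuclideanGeometry.mem_sphere] at this
    rw [dist_comm]; exact this
  have hrad0 : 0 ≤ cs.radius := (hdist ⟨0, hk⟩) ▸ dist_nonneg
  have hcirc : IsCircum (Set.range y) cs.center cs.radius ∧ 0 ≤ cs.radius := by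
    refine ⟨⟨hcs_mem, ?_⟩, hrad0⟩
    rintro _ ⟨i, rfl⟩; exact hdist i
  have hEU : ∃! p : (EuclideanSpace ℝ (Fin k)) × ℝ,
      IsCircum (Set.range y) p.1 p.2 ∧ 0 ≤ p.2 := by
    refine ⟨(cs.center, cs.radius), hcirc, ?_⟩
    rintro ⟨c, ρ⟩ ⟨⟨hc1, hc2⟩, hρ⟩
    have : (⟨c, ρ⟩ : EuclideanGeometry.Sphere (EuclideanSpace ℝ (Fin k))) = cs := by
      refine hcs_uniq _ ⟨hc1, ?_⟩
      rintro _ ⟨i, rfl⟩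
      rw [EuclideanGeometry.Sphere.mem_coe, EuclideanGeometry.mem_sphere, dist_comm]
      exact hc2 _ ⟨i, rfl⟩
    simpa [Prod.ext_iff] using congrArg
      (fun s : EuclideanGeometry.Sphere (EuclideanSpace ℝ (Fin k)) => (s.center, s.radius)) this
  have hex : ∃ p : (EuclideanSpace ℝ (Fin k)) × ℝ,
      IsCircum (Set.range y) p.1 p.2 ∧ 0 ≤ p.2 := ⟨(cs.center, cs.radius), hcirc⟩
  have hdata : circumData (Set.range y) = (cs.center, cs.radius) := by
    rw [circumData, dif_pos hex]
    exact hEU.unique hex.choose_spec hcirc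
  set ρ : ℝ := circumradius (Set.range y) with hρdef
  have hρ : ρ = cs.radius := by rw [hρdef, circumradius, hdata]
  set c : EuclideanSpace ℝ (Fin k) := cs.center with hcdef
  -- affine combination weights
  obtain ⟨w, hw1, hwc⟩ := eq_affineCombination_of_mem_affineSpan_of_fintype hcs_mem
  have hc_eq : c = ∑ i, w i • y i := by
    rw [hwc, Finset.affineCombination_eq_linear_combination _ _ _ hw1]
  -- inner products with the center
  have hinner : ∀ i, (inner ℝ c (y i) : ℝ) = (‖c‖ ^ 2 + 1 - ρ ^ 2) / 2 := by
    intro i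
    have h1 : ‖c - y i‖ = ρ := by rw [← dist_eq_norm, hρ]; exact hdist i
    have h2 : ‖c - y i‖ ^ 2 = ‖c‖ ^ 2 - 2 * inner ℝ c (y i) + ‖y i‖ ^ 2 :=
      norm_sub_sq_real c (y i)
    rw [h1, hunit i] at h2
    linarith
  have hnormsq : ‖c‖ ^ 2 = 1 - ρ ^ 2 := by
    have h3 : (inner ℝ c c : ℝ) = ∑ i, w i * inner ℝ c (y i) := by
      nth_rewrite 2 [hc_eq]
      rw [inner_sum]
      simp_rw [real_inner_smul_right]
    have h4 : (inner ℝ c c : ℝ) = ‖c‖ ^ 2 := real_inner_self_eq_norm_sq c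
    have h5 : (inner ℝ c c : ℝ) = (‖c‖ ^ 2 + 1 - ρ ^ 2) / 2 := by
      rw [h3]
      simp_rw [hinner]
      rw [← Finset.sum_mul, hw1, one_mul]
    linarith
  have hc0 : c ≠ 0 := by
    intro h0
    have hz : ∀ i ∈ Finset.univ, w i = 0 :=
      linearIndependent_iff'.1 hli Finset.univ w (by rw [← hc_eq, h0])
    have : (1 : ℝ) = 0 := by rw [← hw1]; exact Finset.sum_eq_zero hz
    norm_num at this
  have hpos : 0 < 1 - ρ ^ 2 := by
    rw [← hnormsq]
    exact pow_pos (norm_pos_iff.mpr hc0) 2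
  have hρ0 : 0 ≤ ρ := hρ ▸ hrad0
  have hρlt : ρ < 1 := by nlinarith
  refine ⟨haff, hEU, hρlt, ?_⟩
  -- the Gram matrix
  set G : Matrix (Fin k) (Fin k) ℝ :=
    Matrix.of fun i j : Fin k => (inner ℝ (y i) (y j) : ℝ) with hGdef
  have hker : ∀ v : Fin k → ℝ, G.mulVec v = 0 → v = 0 := by
    intro v hv
    have hrow : ∀ i, ∑ j, v j * (inner ℝ (y i) (y j) : ℝ) = 0 := by
      intro i
      have h := congrFun hv i
      have h' : ∑ j, (inner ℝ (y i) (y j) : ℝ) * v j = 0 := h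
      rw [← h']
      exact Finset.sum_congr rfl fun j _ => mul_comm (v j) _
    have h0 : (inner ℝ (∑ i, v i • y i) (∑ i, v i • y i) : ℝ) = 0 := by
      rw [sum_inner]
      refine Finset.sum_eq_zero fun i _ => ?_
      rw [real_inner_smul_left, inner_sum]
      simp_rw [real_inner_smul_right]
      rw [hrow i, mul_zero]
    have hz : ∑ i, v i • y i = 0 := inner_self_eq_zero.1 h0
    exact funext fun i =>
      linearIndependent_iff'.1 hli Finset.univ v hz i (Finset.mem_univ i)
  have hGdet0 : G.det ≠ 0 := by
    intro h
    obtain ⟨v, hv0, hv⟩ := (Matrix.exists_mulVec_eq_zero_iff).2 h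
    exact hv0 (hker v hv)
  have hGdet : IsUnit G.det := hGdet0.isUnit
  -- G *ᵥ w is constant
  have hGw : G.mulVec w = fun _ => 1 - ρ ^ 2 := by
    funext i
    have heq : (G.mulVec w) i = inner ℝ (y i) c := by
      rw [hc_eq, inner_sum]
      simp only [Matrix.mulVec, dotProduct, hGdef, Matrix.of_apply, real_inner_smul_right]
      exact Finset.sum_congr rfl fun j _ => mul_comm _ _
    rw [heq, real_inner_comm, hinner i, hnormsq]
    ring
  have hwinv : w = G⁻¹.mulVec fun _ => 1 - ρ ^ 2 := by
    rw [← hGw, Matrix.mulVec_mulVec, Matrix.nonsing_inv_mul _ hGdet, Matrix.one_mulVec]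
  have hsumw : (1 : ℝ) = (1 - ρ ^ 2) * ∑ i, ∑ j, G⁻¹ i j := by
    have hstep : ∑ i, w i = (1 - ρ ^ 2) * ∑ i, ∑ j, G⁻¹ i j := by
      have hco : ∀ i, w i = ∑ j, G⁻¹ i j * (1 - ρ ^ 2) := fun i => congrFun hwinv i
      rw [Finset.mul_sum]
      refine Finset.sum_congr rfl fun i _ => ?_
      rw [hco i, Finset.mul_sum]
      exact Finset.sum_congr rfl fun j _ => mul_comm (G⁻¹ i j) (1 - ρ ^ 2)
    rw [← hstep]
    exact hw1.symm
  rw [eq_div_iff (by linarith : (1 : ℝ) - ρ ^ 2 ≠ 0), mul_comm]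
  exact hsumw.symm
end
end

section
/- Let X = {x₁,…,x_k} be a finite positive definite metric space. Then there exist vectors y₁,…,y_k ∈ ℝ^k with yᵢ·yⱼ = exp(−d(xᵢ,xⱼ)) for all i,j; moreover, for any such vectors, the set Y = {y₁,…,y_k} is a similarity embedding (in particular ρ_Y < 1), and the magnitude satisfies |X| = 1/(1−ρ_Y²). -/
open Metric

noncomputable section

/-- The tri-similarity inequality for a triple of points of a Euclidean space. -/
def TriSim {E : Type*} [NormedAddCommGroup E] [InnerProductSpace ℝ E] (a b c : E) : Prop :=
  ‖a - c‖ ^ 2 + (1 / 2) * (‖a - b‖ ^ 2 * ‖b - c‖ ^ 2) ≤ ‖a - b‖ ^ 2 + ‖b - c‖ ^ 2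

/-- A similarity embedding: a finite affinely independent subset `Y` of a Euclidean space
with `‖y − y'‖² < 2` for all `y, y' ∈ Y`, circumradius `< 1`, and all triples satisfying
the tri-similarity inequality. -/
def IsSimEmb {E : Type*} [NormedAddCommGroup E] [InnerProductSpace ℝ E] (Y : Set E) : Prop :=
  Y.Finite ∧ AffineIndependent ℝ ((↑) : Y → E) ∧
    (∀ y ∈ Y, ∀ y' ∈ Y, ‖y - y'‖ ^ 2 < 2) ∧
    circumradius Y < 1 ∧
    ∀ a ∈ Y, ∀ b ∈ Y, ∀ c ∈ Y, TriSim a b c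


/-- Uniqueness of the circumradius of a nonempty set. -/
theorem circum_radius_unique {E : Type*} [NormedAddCommGroup E] [InnerProductSpace ℝ E]
    {Y : Set E} (hY : Y.Nonempty) {c₁ c₂ : E} {ρ₁ ρ₂ : ℝ}
    (h₁ : IsCircum Y c₁ ρ₁) (h₂ : IsCircum Y c₂ ρ₂) : ρ₁ = ρ₂ := by
  obtain ⟨h1m, h1d⟩ := h₁
  obtain ⟨h2m, h2d⟩ := h₂
  have hv : c₁ - c₂ ∈ vectorSpan ℝ Y := by
    have := AffineSubspace.vsub_mem_direction h1m h2m
    rwa [direction_affineSpan] at this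
  have hle : vectorSpan ℝ Y ≤ (ℝ ∙ (c₁ - c₂))ᗮ := by
    rw [vectorSpan_def]
    refine Submodule.span_le.2 ?_
    rintro u hu
    obtain ⟨a, ha, b, hb, rfl⟩ := Set.mem_vsub.1 hu
    simp only [SetLike.mem_coe]
    rw [Submodule.mem_orthogonal_singleton_iff_inner_left]
    have e1 : dist c₁ a ^ 2 = dist c₁ b ^ 2 := by rw [h1d a ha, h1d b hb]
    have e2 : dist c₂ a ^ 2 = dist c₂ b ^ 2 := by rw [h2d a ha, h2d b hb]
    rw [dist_eq_norm, dist_eq_norm, norm_sub_sq_real, norm_sub_sq_real] at e1 e2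
    have hab : (a -ᵥ b : E) = a - b := rfl
    rw [hab, inner_sub_left, inner_sub_right, inner_sub_right]
    have q1 : (inner ℝ a c₁ : ℝ) = inner ℝ c₁ a := real_inner_comm _ _
    have q2 : (inner ℝ b c₁ : ℝ) = inner ℝ c₁ b := real_inner_comm _ _
    have q3 : (inner ℝ a c₂ : ℝ) = inner ℝ c₂ a := real_inner_comm _ _
    have q4 : (inner ℝ b c₂ : ℝ) = inner ℝ c₂ b := real_inner_comm _ _
    linarith
  have hz : (inner ℝ (c₁ - c₂) (c₁ - c₂) : ℝ) = 0 := by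
    have := hle hv
    rw [Submodule.mem_orthogonal_singleton_iff_inner_left] at this
    exact this
  have hc : c₁ = c₂ := by
    rw [inner_self_eq_zero] at hz; exact sub_eq_zero.1 hz
  obtain ⟨y₀, hy₀⟩ := hY
  rw [← h1d y₀ hy₀, ← h2d y₀ hy₀, hc]

theorem circumradius_eq {E : Type*} [NormedAddCommGroup E] [InnerProductSpace ℝ E]
    {Y : Set E} (hY : Y.Nonempty) {c : E} {ρ : ℝ}
    (h : IsCircum Y c ρ) (hρ : 0 ≤ ρ) : circumradius Y = ρ := by
  have hex : ∃ p : E × ℝ, IsCircum Y p.1 p.2 ∧ 0 ≤ p.2 := ⟨(c, ρ), h, hρ⟩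
  rw [circumradius, circumData, dif_pos hex]
  exact circum_radius_unique hY hex.choose_spec.1 h

set_option maxHeartbeats 1000000 in
/-- For a finite positive definite metric space `X = {x₁,…,x_k}`, there exist vectors
`y₁,…,y_k ∈ ℝ^k` with `yᵢ·yⱼ = exp(−d(xᵢ,xⱼ))`; moreover any such vectors form a
similarity embedding `Y`, and `|X| = 1/(1−ρ_Y²)`. -/
theorem exists_similarity_embedding_and_magnitude_eq
    (k : ℕ) (hk : 0 < k) (MX : MetricSpace (Fin k)) (hpd : (zetaM MX).PosDef) :
    (∃ y : Fin k → EuclideanSpace ℝ (Fin k),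
      ∀ i j, (inner ℝ (y i) (y j) : ℝ)
        = Real.exp (-(MX.toPseudoMetricSpace.toDist.dist i j))) ∧
    ∀ y : Fin k → EuclideanSpace ℝ (Fin k),
      (∀ i j, (inner ℝ (y i) (y j) : ℝ)
        = Real.exp (-(MX.toPseudoMetricSpace.toDist.dist i j))) →
      IsSimEmb (Set.range y) ∧
        magnitudeM MX = 1 / (1 - circumradius (Set.range y) ^ 2) := by
  classical
  set ζ := zetaM MX with hζdef
  have hζ : ∀ i j, ζ i j = Real.exp (-(MX.toPseudoMetricSpace.toDist.dist i j)) :=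
    fun i j => rfl
  -- existence of Gram vectors
  have hex : ∃ y : Fin k → EuclideanSpace ℝ (Fin k),
      ∀ i j, (inner ℝ (y i) (y j) : ℝ)
        = Real.exp (-(MX.toPseudoMetricSpace.toDist.dist i j)) := by
    obtain ⟨B, hBs, hBh⟩ : ∃ B : Matrix (Fin k) (Fin k) ℝ, B * B = zetaM MX ∧ B.IsHermitian := by
      open scoped MatrixOrder in
      exact ⟨CFC.sqrt (zetaM MX), CFC.sqrt_mul_sqrt_self _ hpd.posSemidef.nonneg,
        by simpa using (CFC.sqrt_nonneg (zetaM MX)).1⟩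
    refine ⟨fun i => (WithLp.equiv 2 (Fin k → ℝ)).symm (fun x => B x i), fun i j => ?_⟩
    have h1 : (inner ℝ ((WithLp.equiv 2 (Fin k → ℝ)).symm (fun x => B x i))
        ((WithLp.equiv 2 (Fin k → ℝ)).symm (fun x => B x j)) : ℝ) = ∑ x, B x i * B x j := by
      simp [PiLp.inner_apply, RCLike.inner_apply, starRingEnd_apply]
      exact Finset.sum_congr rfl fun _ _ => mul_comm _ _
    rw [h1]
    have h2 : ∑ x, B x i * B x j = (B * B) i j := by
      rw [Matrix.mul_apply]
      congr 1; ext x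
      rw [show B x i = B i x from by simpa using (hBh.apply x i).symm]
    rw [h2, hBs]
    rfl
  refine ⟨hex, ?_⟩
  intro y hy
  have hyζ : ∀ i j, (inner ℝ (y i) (y j) : ℝ) = ζ i j := fun i j => hy i j
  have hnorm1 : ∀ i, ‖y i‖ ^ 2 = 1 := by
    intro i
    rw [← real_inner_self_eq_norm_sq, hyζ, hζ, dist_self, neg_zero, Real.exp_zero]
  have hsub : ∀ i j, ‖y i - y j‖ ^ 2
      = 2 - 2 * Real.exp (-(MX.toPseudoMetricSpace.toDist.dist i j)) := by
    intro i j
    rw [norm_sub_sq_real, hnorm1, hnorm1, hy]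
    ring
  have hexppos : ∀ i j, 0 < Real.exp (-(MX.toPseudoMetricSpace.toDist.dist i j)) :=
    fun i j => Real.exp_pos _
  -- linear independence
  have hli : LinearIndependent ℝ y := by
    rw [Fintype.linearIndependent_iff]
    intro g hg
    by_contra hne
    push_neg at hne
    obtain ⟨i₀, hi₀⟩ := hne
    have hgne : g ≠ 0 := fun h => hi₀ (by rw [h]; rfl)
    have hpos := hpd.re_dotProduct_pos (x := g) hgne
    have hcalc : dotProduct (star g) (ζ.mulVec g)
        = (inner ℝ (∑ i, g i • y i) (∑ j, g j • y j) : ℝ) := by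
      rw [sum_inner]
      unfold dotProduct Matrix.mulVec
      simp only [Pi.star_apply, star_trivial]
      refine Finset.sum_congr rfl fun i _ => ?_
      unfold dotProduct
      rw [real_inner_smul_left, inner_sum, Finset.mul_sum, Finset.mul_sum]
      refine Finset.sum_congr rfl fun j _ => ?_
      rw [real_inner_smul_right, hyζ]
      ring
    rw [hcalc, hg] at hpos
    simp at hpos
  have hinj : Function.Injective y := hli.injective
  -- magnitude data
  set μ := magnitudeM MX with hμdef
  have hζinv : ζ * ζ⁻¹ = 1 :=
    Matrix.mul_nonsing_inv _ ((Matrix.isUnit_iff_isUnit_det _).1 hpd.isUnit)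
  set w : Fin k → ℝ := ζ⁻¹.mulVec (fun _ => 1) with hwdef
  have hμw : μ = ∑ i, w i := by
    rw [hμdef, magnitudeM]
    refine Finset.sum_congr rfl fun i _ => ?_
    rw [hwdef]
    unfold Matrix.mulVec dotProduct
    simp only [hζdef, mul_one]
    congr!
  have hζw : ζ.mulVec w = fun _ => 1 := by
    rw [hwdef, Matrix.mulVec_mulVec, hζinv, Matrix.one_mulVec]
  have hμpos : 0 < μ := by
    have h1ne : (fun _ => (1:ℝ) : Fin k → ℝ) ≠ 0 := by
      intro h
      have := congrFun h ⟨0, hk⟩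
      simp at this
    have := (hpd.inv).re_dotProduct_pos h1ne
    simp only [RCLike.re_to_real] at this
    rw [hμw]
    convert this using 1
    unfold dotProduct
    simp
    rfl
  have hμne : μ ≠ 0 := ne_of_gt hμpos
  -- circumcenter
  set c : EuclideanSpace ℝ (Fin k) := ∑ i, (w i / μ) • y i with hcdef
  have hWsum : ∑ i, w i / μ = 1 := by
    rw [← Finset.sum_div, ← hμw, div_self hμne]
  have hζsymm : ∀ i j, ζ i j = ζ j i := by
    intro i j; rw [hζ, hζ, dist_comm]
  have hcy : ∀ j, (inner ℝ c (y j) : ℝ) = 1 / μ := by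
    intro j
    rw [hcdef, sum_inner]
    have : ∀ i ∈ Finset.univ, (inner ℝ ((w i / μ) • y i) (y j) : ℝ) = (ζ j i * w i) / μ := by
      intro i _
      rw [real_inner_smul_left, hyζ, hζsymm i j]
      ring
    rw [Finset.sum_congr rfl this, ← Finset.sum_div]
    have : ∑ i, ζ j i * w i = 1 := by
      have := congrFun hζw j
      unfold Matrix.mulVec dotProduct at this
      simpa using this
    rw [this]
  have hcc : (inner ℝ c c : ℝ) = 1 / μ := by
    conv_lhs => rw [hcdef]
    rw [sum_inner]
    have : ∀ i ∈ Finset.univ, (inner ℝ ((w i / μ) • y i) c : ℝ) = (w i / μ) * (1 / μ) := by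
      intro i _
      rw [real_inner_smul_left, real_inner_comm, hcy]
    rw [Finset.sum_congr rfl this, ← Finset.sum_mul, hWsum, one_mul]
  have hdist2 : ∀ j, dist c (y j) ^ 2 = 1 - 1 / μ := by
    intro j
    rw [dist_eq_norm, norm_sub_sq_real, ← real_inner_self_eq_norm_sq c, hcc, hcy, hnorm1]
    ring
  have h1μ : 0 ≤ 1 - 1 / μ := by
    have := hdist2 ⟨0, hk⟩
    nlinarith [sq_nonneg (dist c (y ⟨0, hk⟩))]
  set ρ := Real.sqrt (1 - 1 / μ) with hρdef
  have hρsq : ρ ^ 2 = 1 - 1 / μ := Real.sq_sqrt h1μ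
  have hρnn : 0 ≤ ρ := Real.sqrt_nonneg _
  have hρd : ∀ j, dist c (y j) = ρ := by
    intro j
    rw [hρdef, ← hdist2 j, Real.sqrt_sq dist_nonneg]
  have hcmem : c ∈ affineSpan ℝ (Set.range y) := by
    have := affineCombination_mem_affineSpan (k := ℝ) (s := Finset.univ)
      (w := fun i => w i / μ) hWsum y
    rwa [Finset.univ.affineCombination_eq_linear_combination y _ hWsum] at this
  have hcirc : IsCircum (Set.range y) c ρ := by
    refine ⟨hcmem, ?_⟩
    rintro z ⟨j, rfl⟩
    exact hρd j
  have hcr : circumradius (Set.range y) = ρ :=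
    circumradius_eq ⟨y ⟨0, hk⟩, Set.mem_range_self _⟩ hcirc hρnn
  constructor
  · have haff : AffineIndependent ℝ y := by
      rw [affineIndependent_iff]
      intro s wts _ hcomb
      exact linearIndependent_iff'.1 hli s wts hcomb
    refine ⟨Set.finite_range y, haff.range, ?_, ?_, ?_⟩
    · rintro z ⟨i, rfl⟩ z' ⟨j, rfl⟩
      rw [hsub]
      nlinarith [hexppos i j]
    · rw [hcr, hρdef]
      rw [Real.sqrt_lt' one_pos]
      have : 0 < 1 / μ := by positivity
      nlinarith
    · rintro a ⟨i, rfl⟩ b ⟨j, rfl⟩ d ⟨l, rfl⟩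
      rw [TriSim, hsub, hsub, hsub]
      have htri : MX.toPseudoMetricSpace.toDist.dist i l
          ≤ MX.toPseudoMetricSpace.toDist.dist i j + MX.toPseudoMetricSpace.toDist.dist j l :=
        dist_triangle i j l
      have hmul : Real.exp (-(MX.toPseudoMetricSpace.toDist.dist i j))
          * Real.exp (-(MX.toPseudoMetricSpace.toDist.dist j l))
          ≤ Real.exp (-(MX.toPseudoMetricSpace.toDist.dist i l)) := by
        rw [← Real.exp_add]
        apply Real.exp_le_exp.2
        linarith
      nlinarith [hexppos i j, hexppos j l, hexppos i l]
  · rw [hcr, hρsq]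
    field_simp
    ring
end
end

section
/- Let Y = {y₁,…,y_k} be a similarity embedding in ℝ^d (with y₁,…,y_k pairwise distinct). Then d'(i,j) := −log(1 − (1/2)∥yᵢ−yⱼ∥²) for i ≠ j, together with d'(i,i) = 0, defines a metric on {1,…,k}; the resulting finite metric space X' is positive definite (its zeta matrix (exp(−d'(i,j)))_{i,j} is positive definite); and its magnitude satisfies |X'| = 1/(1−ρ_Y²). -/
open Metric

noncomputable section

lemma magnitudeM_eq {α : Type*} [Fintype α] [DecidableEq α] (M : MetricSpace α) :
    magnitudeM M = ∑ x, ∑ y, (zetaM M)⁻¹ x y := by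
  unfold magnitudeM
  congr!

set_option maxHeartbeats 1000000 in
/-- If `Y = {y₁,…,y_k}` is a similarity embedding in `ℝ^d` with pairwise distinct points,
then `d'(i,j) = −log(1 − ½‖yᵢ−yⱼ‖²)` defines a metric on `{1,…,k}`, the resulting finite
metric space is positive definite, and its magnitude equals `1/(1−ρ_Y²)`. -/
theorem similarity_embedding_metric_posDef_magnitude
    (k d : ℕ) (hk : 0 < k) (y : Fin k → EuclideanSpace ℝ (Fin d))
    (hinj : Function.Injective y) (hY : IsSimEmb (Set.range y)) :
    ∃ M : MetricSpace (Fin k),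
      (∀ i j, M.toPseudoMetricSpace.toDist.dist i j
        = -Real.log (1 - (1 / 2) * ‖y i - y j‖ ^ 2)) ∧
      (zetaM M).PosDef ∧
      magnitudeM M = 1 / (1 - circumradius (Set.range y) ^ 2) := by
  classical
  obtain ⟨n, rfl⟩ := Nat.exists_eq_succ_of_ne_zero hk.ne'
  obtain ⟨-, hindep, hlt, hρlt, htri⟩ := hY
  -- affine independence of the family `y`
  have hay : AffineIndependent ℝ y := by
    have h := hindep.comp_embedding (Equiv.ofInjective y hinj).toEmbedding
    have : ((↑) : Set.range y → EuclideanSpace ℝ (Fin d)) ∘ (Equiv.ofInjective y hinj) = y := by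
      funext i; simp [Equiv.ofInjective_apply]
    rwa [Function.comp_def] at h
  -- the circumsphere data
  let s : Affine.Simplex ℝ (EuclideanSpace ℝ (Fin d)) n := ⟨y, hay⟩
  have hex : ∃ p : EuclideanSpace ℝ (Fin d) × ℝ, IsCircum (Set.range y) p.1 p.2 ∧ 0 ≤ p.2 := by
    refine ⟨(s.circumcenter, s.circumradius), ⟨s.circumcenter_mem_affineSpan, ?_⟩,
      s.circumradius_nonneg⟩
    rintro z ⟨i, rfl⟩
    rw [dist_comm]
    exact s.dist_circumcenter_eq_circumradius i
  have hdata : circumData (Set.range y) = hex.choose := dif_pos hex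
  set c : EuclideanSpace ℝ (Fin d) := (circumData (Set.range y)).1 with hc
  set ρ : ℝ := circumradius (Set.range y) with hrho
  have hspec : IsCircum (Set.range y) c ρ ∧ 0 ≤ ρ := by
    rw [hc, hrho, circumradius, hdata]; exact hex.choose_spec
  have hcmem : c ∈ affineSpan ℝ (Set.range y) := hspec.1.1
  have hρ0 : (0:ℝ) ≤ ρ := hspec.2
  have hρpos : 0 < 1 - ρ ^ 2 := by nlinarith [hρlt, hρ0]
  have hnorm : ∀ i, ‖y i - c‖ = ρ := by
    intro i
    rw [← dist_eq_norm, dist_comm]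
    exact hspec.1.2 (y i) ⟨i, rfl⟩
  set v : Fin (n+1) → EuclideanSpace ℝ (Fin d) := fun i => y i - c with hv
  have hkey : ∀ i j, 1 - (1/2 : ℝ) * ‖y i - y j‖ ^ 2 = (1 - ρ^2) + inner ℝ (v i) (v j) := by
    intro i j
    have h1 : y i - y j = v i - v j := (sub_sub_sub_cancel_right (y i) (y j) c).symm
    rw [h1, @norm_sub_sq_real, hnorm i, hnorm j]
    ring
  have hApos : ∀ i j, 0 < 1 - (1/2 : ℝ) * ‖y i - y j‖ ^ 2 := by
    intro i j
    have := hlt (y i) ⟨i, rfl⟩ (y j) ⟨j, rfl⟩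
    linarith
  -- the metric
  set D : Fin (n+1) → Fin (n+1) → ℝ :=
    fun i j => -Real.log (1 - (1/2 : ℝ) * ‖y i - y j‖ ^ 2) with hD
  have hDself : ∀ i, D i i = 0 := by intro i; simp [hD]
  have hDcomm : ∀ i j, D i j = D j i := by intro i j; simp [hD, norm_sub_rev]
  have hDtri : ∀ i j l, D i l ≤ D i j + D j l := by
    intro i j l
    have ht := htri (y i) ⟨i, rfl⟩ (y j) ⟨j, rfl⟩ (y l) ⟨l, rfl⟩
    unfold TriSim at ht
    have hmul : (1 - (1/2:ℝ) * ‖y i - y j‖ ^ 2) * (1 - (1/2:ℝ) * ‖y j - y l‖ ^ 2)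
        ≤ 1 - (1/2:ℝ) * ‖y i - y l‖ ^ 2 := by nlinarith
    have hlog := Real.log_le_log (mul_pos (hApos i j) (hApos j l)) hmul
    rw [Real.log_mul (hApos i j).ne' (hApos j l).ne'] at hlog
    simp only [hD]
    linarith
  have hDeq : ∀ i j, D i j = 0 → i = j := by
    intro i j h
    have h1 : Real.log (1 - (1/2:ℝ) * ‖y i - y j‖ ^ 2) = 0 := by
      simpa [hD] using h
    have h2 := Real.log_eq_zero.mp h1
    have hA := hApos i j
    have : (1:ℝ) - (1/2:ℝ) * ‖y i - y j‖ ^ 2 = 1 := by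
      rcases h2 with h | h | h
      · linarith
      · exact h
      · linarith
    have hnz : ‖y i - y j‖ = 0 := by nlinarith [norm_nonneg (y i - y j), sq_nonneg ‖y i - y j‖]
    exact hinj (by rwa [norm_eq_zero, sub_eq_zero] at hnz)
  set M : MetricSpace (Fin (n+1)) :=
    { dist := D
      dist_self := hDself
      dist_comm := hDcomm
      dist_triangle := fun i j l => hDtri i j l
      eq_of_dist_eq_zero := fun {i j} h => hDeq i j h } with hM
  have hzeta : ∀ i j, zetaM M i j = (1 - ρ^2) + inner ℝ (v i) (v j) := by
    intro i j
    show Real.exp (-D i j) = _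
    simp only [hD, neg_neg]
    rw [Real.exp_log (hApos i j)]
    exact hkey i j
  have hpd : (zetaM M).PosDef := by
    refine Matrix.PosDef.of_dotProduct_mulVec_pos ?_ ?_
    · ext i j
      simp only [Matrix.conjTranspose_apply, star_trivial, hzeta, real_inner_comm]
    · intro x hx
      have expand : dotProduct (star x) (Matrix.mulVec (zetaM M) x)
          = (1 - ρ^2) * (∑ i, x i) ^ 2 + ‖∑ i, x i • v i‖ ^ 2 := by
        have hVV : ‖∑ i, x i • v i‖ ^ 2 = ∑ i, ∑ j, x i * x j * inner ℝ (v i) (v j) := by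
          rw [← real_inner_self_eq_norm_sq, sum_inner]
          refine Finset.sum_congr rfl fun i _ => ?_
          rw [real_inner_smul_left, inner_sum, Finset.mul_sum]
          refine Finset.sum_congr rfl fun j _ => ?_
          rw [real_inner_smul_right]; ring
        have hSS : (∑ i, x i) ^ 2 = ∑ i, ∑ j, x i * x j := by
          rw [sq, Finset.sum_mul_sum]
        rw [hVV, hSS, Finset.mul_sum, ← Finset.sum_add_distrib]
        simp only [dotProduct, Matrix.mulVec, star_trivial, hzeta]
        refine Finset.sum_congr rfl fun i _ => ?_
        rw [Finset.mul_sum, Finset.mul_sum, ← Finset.sum_add_distrib]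
        refine Finset.sum_congr rfl fun j _ => ?_
        ring
      rw [expand]
      set S : ℝ := ∑ i, x i with hSdef
      set V : EuclideanSpace ℝ (Fin d) := ∑ i, x i • v i with hVdef
      rcases eq_or_ne S 0 with hS | hS
      · have hVne : V ≠ 0 := by
          intro hV
          have hylin : ∑ i, x i • y i = 0 := by
            have h2 : ∑ i, x i • y i = (∑ i, x i • v i) + (∑ i, x i) • c := by
              rw [Finset.sum_smul, ← Finset.sum_add_distrib]
              refine Finset.sum_congr rfl fun i _ => ?_
              rw [hv]; rw [smul_sub]; abel
            rw [h2, ← hVdef, hV, ← hSdef, hS, zero_smul, add_zero]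
          have hzero := affineIndependent_iff.mp hay Finset.univ x
            (by simpa using hS) (by simpa using hylin)
          exact hx (funext fun i => hzero i (Finset.mem_univ i))
        have h1 : 0 < ‖V‖ ^ 2 := by
          have := norm_pos_iff.mpr hVne
          positivity
        have h2 : 0 ≤ (1 - ρ^2) * S ^ 2 := by positivity
        linarith
      · have h1 : 0 < (1 - ρ^2) * S ^ 2 := by positivity
        have h2 : 0 ≤ ‖V‖ ^ 2 := by positivity
        linarith
  refine ⟨M, fun i j => rfl, hpd, ?_⟩
  · -- magnitude
    obtain ⟨w, hw1, hwc⟩ := eq_affineCombination_of_mem_affineSpan_of_fintype hcmem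
    have hc_eq : c = ∑ i, w i • y i := by
      rw [hwc, Finset.affineCombination_eq_linear_combination _ _ _ hw1]
    have hV0 : ∑ j, w j • v j = 0 := by
      have : ∑ j, w j • v j = (∑ j, w j • y j) - (∑ j, w j) • c := by
        rw [Finset.sum_smul, ← Finset.sum_sub_distrib]
        refine Finset.sum_congr rfl fun j _ => ?_
        rw [hv, smul_sub]
      rw [this, ← hc_eq, hw1, one_smul, sub_self]
    have hmulw : Matrix.mulVec (zetaM M) w = fun _ => (1 - ρ^2) := by
      funext i
      show ∑ j, zetaM M i j * w j = (1 - ρ^2)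
      have : ∑ j, zetaM M i j * w j
          = (1 - ρ^2) * (∑ j, w j) + inner ℝ (v i) (∑ j, w j • v j) := by
        rw [inner_sum, Finset.mul_sum, ← Finset.sum_add_distrib]
        refine Finset.sum_congr rfl fun j _ => ?_
        rw [hzeta, real_inner_smul_right]; ring
      rw [this, hV0, inner_zero_right, hw1, mul_one, add_zero]
    have hdet : IsUnit (zetaM M).det := isUnit_iff_ne_zero.mpr hpd.det_pos.ne'
    have hinv : Matrix.mulVec (zetaM M)⁻¹ (fun _ => (1 - ρ^2)) = w := by
      rw [← hmulw, Matrix.mulVec_mulVec, Matrix.nonsing_inv_mul _ hdet, Matrix.one_mulVec]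
    rw [magnitudeM_eq]
    have hrow : ∀ i, ∑ j, (zetaM M)⁻¹ i j = (1 - ρ^2)⁻¹ * w i := by
      intro i
      have h1 := congrFun hinv i
      simp only [Matrix.mulVec, dotProduct] at h1
      have h2 : (∑ j, (zetaM M)⁻¹ i j) * (1 - ρ^2) = w i := by
        rw [Finset.sum_mul]; exact h1
      rw [← h2, mul_comm (∑ j, (zetaM M)⁻¹ i j), ← mul_assoc,
        inv_mul_cancel₀ hρpos.ne', one_mul]
    rw [Finset.sum_congr rfl fun i _ => hrow i, ← Finset.mul_sum, hw1, mul_one,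
      one_div]
end
end

section
/- Let y₁,…,y_k ∈ ℝ^k and let G = (yᵢ·yⱼ)_{1≤i,j≤k} be their Gram matrix. Then the cofactor sum Σ_{i,j=1}^{k} (−1)^{i+j} det(G^{(i,j)}), where G^{(i,j)} denotes G with its i-th row and j-th column removed, equals the determinant of the (k−1)×(k−1) Gram matrix of the difference vectors y₂−y₁, y₃−y₁, …, y_k−y₁. -/
open Matrix Finset

namespace CofactorAux

variable {n : ℕ}

/-- The strictly lower-triangular "all ones in column 0" matrix. -/
def E (n : ℕ) : Matrix (Fin (n+1)) (Fin (n+1)) ℝ :=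
  Matrix.of fun i j => (if i = 0 then 0 else 1) * (if j = 0 then 1 else 0)

def P (n : ℕ) : Matrix (Fin (n+1)) (Fin (n+1)) ℝ := 1 - E n
def Q (n : ℕ) : Matrix (Fin (n+1)) (Fin (n+1)) ℝ := 1 + E n

lemma E_mul_E : E n * E n = 0 := by
  ext i j
  rw [Matrix.mul_apply, Matrix.zero_apply]
  apply Finset.sum_eq_zero
  intro k _
  by_cases hk : k = 0 <;> simp [E, hk]

lemma P_mul_Q : P n * Q n = 1 := by
  simp [P, Q, Matrix.sub_mul, Matrix.mul_add, E_mul_E]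

lemma Q_mul_P : Q n * P n = 1 := by
  simp [P, Q, Matrix.add_mul, Matrix.mul_sub, E_mul_E]

lemma det_P : (P n).det = 1 := by
  rw [Matrix.det_of_lowerTriangular (P n)]
  · refine Finset.prod_eq_one fun i _ => ?_
    by_cases hi : i = 0 <;> simp [P, E, hi]
  · intro i j hij
    have : i < j := hij
    have hj : j ≠ 0 := (lt_of_le_of_lt (Fin.zero_le i) this).ne'
    simp [P, E, hj, this.ne]

lemma adjugate_P : (P n).adjugate = Q n := by
  have h := Matrix.mul_adjugate (P n)
  rw [det_P, one_smul] at h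
  calc (P n).adjugate = (Q n * P n) * (P n).adjugate := by rw [Q_mul_P, Matrix.one_mul]
    _ = Q n * (P n * (P n).adjugate) := by rw [Matrix.mul_assoc]
    _ = Q n := by rw [h, Matrix.mul_one]

lemma adj_conj (M : Matrix (Fin (n+1)) (Fin (n+1)) ℝ) :
    M.adjugate = (P n)ᵀ * (P n * M * (P n)ᵀ).adjugate * P n := by
  rw [Matrix.adjugate_mul_distrib, Matrix.adjugate_mul_distrib, ← Matrix.adjugate_transpose,
    adjugate_P]
  calc M.adjugate = (Q n * P n)ᵀ * M.adjugate * (Q n * P n) := by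
        rw [Q_mul_P, Matrix.transpose_one, Matrix.one_mul, Matrix.mul_one]
    _ = (P n)ᵀ * ((Q n)ᵀ * (M.adjugate * Q n)) * P n := by
        rw [Matrix.transpose_mul]
        noncomm_ring
  -- may need adjusting

lemma P_mulVec_one : P n *ᵥ (fun _ => (1:ℝ)) = Pi.single 0 1 := by
  funext c
  rw [Matrix.mulVec, Pi.single_apply]
  by_cases hc : c = 0 <;>
    simp [dotProduct, P, E, Matrix.sub_apply, Matrix.one_apply, hc,
      Finset.sum_sub_distrib, eq_comm]

lemma sum_conj (N : Matrix (Fin (n+1)) (Fin (n+1)) ℝ) :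
    ∑ a, ∑ b, ((P n)ᵀ * N * P n) a b = N 0 0 := by
  have : ∑ a, ∑ b, ((P n)ᵀ * N * P n) a b
      = (fun _ => (1:ℝ)) ⬝ᵥ (((P n)ᵀ * N * P n) *ᵥ fun _ => (1:ℝ)) := by
    simp [dotProduct, Matrix.mulVec]
  rw [this, ← Matrix.mulVec_mulVec, ← Matrix.mulVec_mulVec, P_mulVec_one,
    Matrix.dotProduct_mulVec, Matrix.vecMul_transpose, P_mulVec_one,
    single_dotProduct, one_mul, Matrix.mulVec_single]
  simp

lemma P_mul_apply (M : Matrix (Fin (n+1)) (Fin (n+1)) ℝ) (i : Fin (n+1)) (hi : i ≠ 0)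
    (j : Fin (n+1)) : (P n * M) i j = M i j - M 0 j := by
  rw [Matrix.mul_apply]
  simp [P, E, Matrix.sub_apply, Matrix.one_apply, hi, sub_mul, Finset.sum_sub_distrib,
    ite_mul, mul_ite, Finset.sum_ite_eq, Finset.sum_ite_eq']

lemma mul_Pt_apply (A : Matrix (Fin (n+1)) (Fin (n+1)) ℝ) (i : Fin (n+1)) (j : Fin (n+1))
    (hj : j ≠ 0) : (A * (P n)ᵀ) i j = A i j - A i 0 := by
  rw [Matrix.mul_apply]
  simp [P, E, Matrix.sub_apply, Matrix.one_apply, Matrix.transpose_apply, hj, mul_sub,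
    Finset.sum_sub_distrib, ite_mul, mul_ite, Finset.sum_ite_eq, Finset.sum_ite_eq']

lemma conj_apply (M : Matrix (Fin (n+1)) (Fin (n+1)) ℝ) (i j : Fin (n+1)) (hi : i ≠ 0)
    (hj : j ≠ 0) : (P n * M * (P n)ᵀ) i j = M i j - M 0 j - (M i 0 - M 0 0) := by
  rw [mul_Pt_apply _ _ _ hj, P_mul_apply _ _ hi, P_mul_apply _ _ hi]

end CofactorAux

/-- Cofactor-sum identity: for vectors `y₁,…,y_k ∈ ℝ^k` with Gram matrix `G`, the sum
`Σ_{i,j} (−1)^{i+j} det(G^{(i,j)})` of the cofactors of `G` equals the determinant of the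
Gram matrix of the difference vectors `y₂−y₁, …, y_k−y₁`. -/
theorem cofactor_sum_gram_eq_det_gram_differences
    (n : ℕ) (y : Fin (n + 1) → EuclideanSpace ℝ (Fin (n + 1))) :
    (∑ i : Fin (n + 1), ∑ j : Fin (n + 1), (-1 : ℝ) ^ ((i : ℕ) + (j : ℕ)) *
        ((Matrix.of fun i j : Fin (n + 1) => (inner ℝ (y i) (y j) : ℝ)).submatrix
          i.succAbove j.succAbove).det)
      = (Matrix.of fun i j : Fin n =>
          (inner ℝ (y i.succ - y 0) (y j.succ - y 0) : ℝ)).det := by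
  classical
  set M : Matrix (Fin (n+1)) (Fin (n+1)) ℝ :=
    Matrix.of fun i j : Fin (n + 1) => (inner ℝ (y i) (y j) : ℝ) with hM
  have h1 : ∀ i j : Fin (n+1), M.adjugate j i
      = (-1 : ℝ) ^ ((i : ℕ) + (j : ℕ)) * (M.submatrix i.succAbove j.succAbove).det :=
    fun i j => Matrix.adjugate_fin_succ_eq_det_submatrix M j i
  calc (∑ i : Fin (n + 1), ∑ j : Fin (n + 1), (-1 : ℝ) ^ ((i : ℕ) + (j : ℕ)) *
        (M.submatrix i.succAbove j.succAbove).det)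
      = ∑ i : Fin (n + 1), ∑ j : Fin (n + 1), M.adjugate j i := by simp_rw [h1]
    _ = ∑ a : Fin (n + 1), ∑ b : Fin (n + 1), M.adjugate a b := Finset.sum_comm
    _ = ∑ a : Fin (n + 1), ∑ b : Fin (n + 1),
          ((CofactorAux.P n)ᵀ * (CofactorAux.P n * M * (CofactorAux.P n)ᵀ).adjugate
            * CofactorAux.P n) a b := by rw [← CofactorAux.adj_conj]
    _ = (CofactorAux.P n * M * (CofactorAux.P n)ᵀ).adjugate 0 0 := CofactorAux.sum_conj _
    _ = ((CofactorAux.P n * M * (CofactorAux.P n)ᵀ).submatrix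
          (Fin.succAbove 0) (Fin.succAbove 0)).det := by
        rw [Matrix.adjugate_fin_succ_eq_det_submatrix]; simp
    _ = (Matrix.of fun i j : Fin n =>
          (inner ℝ (y i.succ - y 0) (y j.succ - y 0) : ℝ)).det := by
        congr 1
        ext i j
        rw [Matrix.submatrix_apply, Fin.succAbove_zero,
          CofactorAux.conj_apply M _ _ (Fin.succ_ne_zero i) (Fin.succ_ne_zero j)]
        simp only [Matrix.of_apply, hM, inner_sub_left, inner_sub_right]
end

section
/- Let X be a finite metric space with at least two points, and let δ₀ = min{d(x₁,x₂) : x₁,x₂ ∈ X, x₁ ≠ x₂}. If X' is a finite metric space with d_GH(X,X') < δ₀/4, then X' admits a partition into exactly #X nonempty subsets such that any two points lying in the same part are at distance less than δ₀/2, and any two points lying in different parts are at distance greater than δ₀/2. -/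
/-- If `X` is a finite metric space with at least two points, `δ₀` is the minimum
distance between distinct points of `X`, and `X'` is a finite metric space with
`d_GH(X, X') < δ₀/4`, then `X'` admits a partition into exactly `#X` nonempty parts
(the fibers of a surjection onto `X`) such that points in the same part are at distance
less than `δ₀/2` and points in different parts are at distance greater than `δ₀/2`. -/
theorem exists_partition_of_ghDist_lt
    (X X' : Type*) [MetricSpace X] [Fintype X] [Nonempty X]
    [MetricSpace X'] [Fintype X'] [Nonempty X']
    (hcard : 2 ≤ Fintype.card X)
    (δ₀ : ℝ) (hδ : IsLeast {d : ℝ | ∃ x₁ x₂ : X, x₁ ≠ x₂ ∧ dist x₁ x₂ = d} δ₀)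
    (hGH : GromovHausdorff.ghDist X X' < δ₀ / 4) :
    ∃ f : X' → X, Function.Surjective f ∧
      (∀ a b : X', f a = f b → dist a b < δ₀ / 2) ∧
      (∀ a b : X', f a ≠ f b → δ₀ / 2 < dist a b) := by
  obtain ⟨x₁, x₂, hne, hd⟩ := hδ.1
  have hδpos : 0 < δ₀ := hd ▸ dist_pos.2 hne
  have hmin : ∀ x y : X, x ≠ y → δ₀ ≤ dist x y := fun x y h => hδ.2 ⟨x, y, h, rfl⟩
  set Φ := GromovHausdorff.optimalGHInjl X X' with hΦdef
  set Ψ := GromovHausdorff.optimalGHInjr X X' with hΨdef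
  have hΦ := GromovHausdorff.isometry_optimalGHInjl X X'
  have hΨ := GromovHausdorff.isometry_optimalGHInjr X X'
  have hH : Metric.hausdorffDist (Set.range Φ) (Set.range Ψ) < δ₀ / 4 := by
    rw [hΦdef, hΨdef, GromovHausdorff.hausdorffDist_optimal]; exact hGH
  have hfin : EMetric.hausdorffEdist (Set.range Φ) (Set.range Ψ) ≠ ⊤ :=
    Metric.hausdorffEdist_ne_top_of_nonempty_of_bounded (Set.range_nonempty _)
      (Set.range_nonempty _) (isCompact_range hΦ.continuous).isBounded
      (isCompact_range hΨ.continuous).isBounded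
  have hchoice : ∀ a : X', ∃ x : X, dist (Ψ a) (Φ x) < δ₀ / 4 := by
    intro a
    obtain ⟨y, ⟨x, rfl⟩, hy⟩ := Metric.exists_dist_lt_of_hausdorffDist_lt
      (Set.mem_range_self a)
      (by rwa [Metric.hausdorffDist_comm] at hH)
      (by rw [EMetric.hausdorffEdist_comm]; exact hfin)
    exact ⟨x, hy⟩
  choose f hf using hchoice
  refine ⟨f, ?_, ?_, ?_⟩
  · intro x
    obtain ⟨y, ⟨a, rfl⟩, hy⟩ := Metric.exists_dist_lt_of_hausdorffDist_lt
      (Set.mem_range_self x) hH hfin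
    refine ⟨a, by_contra fun hxa => ?_⟩
    have h2 : dist (Ψ a) (Φ (f a)) < δ₀ / 4 := hf a
    have h3 : dist (Φ x) (Φ (f a)) ≤ dist (Φ x) (Ψ a) + dist (Ψ a) (Φ (f a)) :=
      dist_triangle _ _ _
    rw [hΦ.dist_eq] at h3
    have h4 : δ₀ ≤ dist x (f a) := hmin _ _ (Ne.symm hxa)
    linarith
  · intro a b hab
    have h1 : dist (Ψ a) (Φ (f a)) < δ₀ / 4 := hf a
    have h2 : dist (Ψ b) (Φ (f b)) < δ₀ / 4 := hf b
    rw [hab] at h1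
    have h3 : dist (Ψ a) (Ψ b) ≤ dist (Ψ a) (Φ (f b)) + dist (Φ (f b)) (Ψ b) :=
      dist_triangle _ _ _
    rw [hΨ.dist_eq] at h3
    have h4 : dist (Φ (f b)) (Ψ b) = dist (Ψ b) (Φ (f b)) := dist_comm _ _
    linarith
  · intro a b hab
    have h1 : dist (Ψ a) (Φ (f a)) < δ₀ / 4 := hf a
    have h2 : dist (Ψ b) (Φ (f b)) < δ₀ / 4 := hf b
    have h4 : δ₀ ≤ dist (f a) (f b) := hmin _ _ hab
    have h3 : dist (Φ (f a)) (Φ (f b)) ≤ dist (Φ (f a)) (Ψ a) + dist (Ψ a) (Ψ b)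
        + dist (Ψ b) (Φ (f b)) := dist_triangle4 _ _ _ _
    rw [hΦ.dist_eq, hΨ.dist_eq, dist_comm (Φ (f a)) (Ψ a)] at h3
    linarith
end

section
/- Let y₁, y₁', y₂, y₂' be points in ℝ³ with y₁ ≠ y₁' and y₂ ≠ y₂', and suppose every ordered triple of points chosen among {y₁, y₁', y₂, y₂'} satisfies the tri-similarity inequality. Then |((y₁'−y₁)/∥y₁'−y₁∥) · ((y₂'−y₂)/∥y₂'−y₂∥)| ≤ C · min{ ∥y₁'−y₁∥/∥y₂'−y₂∥, ∥y₂'−y₂∥/∥y₁'−y₁∥ }, where C = 1 − (1/2)·(min{∥y₁−y₂∥, ∥y₁'−y₂∥, ∥y₁−y₂'∥, ∥y₁'−y₂'∥})². -/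
section aux
variable {E : Type*} [NormedAddCommGroup E] [InnerProductSpace ℝ E]

lemma triSim_inner {a b c : E} (h : TriSim a b c) :
    (inner ℝ (a - b) (b - c) : ℝ) ≤ -(1/4) * (‖a - b‖ ^ 2 * ‖b - c‖ ^ 2) := by
  have hid := norm_add_sq_real (a - b) (b - c)
  rw [sub_add_sub_cancel] at hid
  unfold TriSim at h
  nlinarith [h, hid]

lemma norm_le_two' {a b c : E} (hbc : b ≠ c) (h1 : TriSim a b c) (h2 : TriSim a c b)
    (h3 : TriSim b a c) : ‖b - c‖ ≤ 2 := by
  have e1 : ‖c - b‖ = ‖b - c‖ := norm_sub_rev c b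
  have e2 : ‖b - a‖ = ‖a - b‖ := norm_sub_rev b a
  have e3 : ‖c - a‖ = ‖a - c‖ := norm_sub_rev c a
  have hpos : 0 < ‖b - c‖ := by rwa [norm_pos_iff, sub_ne_zero]
  unfold TriSim at h1 h2 h3
  rw [e1] at h2
  rw [e2] at h3
  have h4 : ‖a - b‖ ^ 2 + ‖a - c‖ ^ 2 ≤ 4 := by nlinarith [mul_pos hpos hpos]
  have h5 : ‖b - c‖ ^ 2 ≤ 4 := by nlinarith [sq_nonneg (‖a - b‖ * ‖a - c‖)]
  nlinarith [sq_nonneg (‖b - c‖ - 2)]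

lemma key {x p q : E} (hq : ‖q - p‖ ≤ 2)
    (ht : x ≠ p → x ≠ q → TriSim x p q) :
    (1/4) * (‖x - p‖ ^ 2 * ‖q - p‖ ^ 2) ≤ inner ℝ (x - p) (q - p) := by
  by_cases h1 : x = p
  · simp [h1]
  by_cases h2 : x = q
  · subst h2
    rw [real_inner_self_eq_norm_sq]
    have h4 : ‖x - p‖ ^ 2 ≤ 4 := by nlinarith [norm_nonneg (x - p)]
    nlinarith [mul_le_mul_of_nonneg_left h4 (sq_nonneg ‖x - p‖)]
  · have h := triSim_inner (ht h1 h2)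
    have e : (inner ℝ (x - p) (q - p) : ℝ) = - inner ℝ (x - p) (p - q) := by
      rw [show q - p = -(p - q) by abel, inner_neg_right]
    have en : ‖p - q‖ = ‖q - p‖ := norm_sub_rev p q
    rw [e]; rw [en] at h; linarith

lemma key' {x p q : E} (hq : ‖q - p‖ ≤ 2)
    (ht : x ≠ q → x ≠ p → TriSim x q p) :
    (inner ℝ (x - q) (q - p) : ℝ) ≤ -(1/4) * (‖x - q‖ ^ 2 * ‖q - p‖ ^ 2) := by
  have hq' : ‖p - q‖ ≤ 2 := by rwa [norm_sub_rev]
  have h := key (x := x) (p := q) (q := p) hq' ht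
  have e : (inner ℝ (x - q) (q - p) : ℝ) = - inner ℝ (x - q) (p - q) := by
    rw [show q - p = -(p - q) by abel, inner_neg_right]
  have en : ‖p - q‖ = ‖q - p‖ := norm_sub_rev p q
  rw [e]; rw [en] at h; linarith

lemma inner_expand₁ (a a' p q : E) :
    (inner ℝ (a' - a) (q - p) : ℝ)
      = inner ℝ (a' - q) (q - p) + inner ℝ (q - p) (q - p) - inner ℝ (a - p) (q - p) := by
  rw [show a' - a = (a' - q) + (q - p) - (a - p) by abel, inner_sub_left, inner_add_left]

lemma inner_expand₂ (a a' p q : E) :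
    (inner ℝ (a' - a) (q - p) : ℝ)
      = inner ℝ (a' - p) (q - p) - inner ℝ (q - p) (q - p) - inner ℝ (a - q) (q - p) := by
  rw [show a' - a = (a' - p) - (q - p) - (a - q) by abel, inner_sub_left, inner_sub_left]

end aux

set_option maxHeartbeats 1000000 in
/-- If `y₁ ≠ y₁'` and `y₂ ≠ y₂'` in `ℝ³` and every triple of distinct points among
`{y₁, y₁', y₂, y₂'}` satisfies the tri-similarity inequality, then the inner product of
the unit vectors in the directions `y₁' − y₁` and `y₂' − y₂` is bounded by
`C · min(‖y₁'−y₁‖/‖y₂'−y₂‖, ‖y₂'−y₂‖/‖y₁'−y₁‖)` with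
`C = 1 − ½ (min of the four cross distances)²`. -/
theorem inner_unit_dir_le_of_triSim
    (y₁ y₁' y₂ y₂' : EuclideanSpace ℝ (Fin 3))
    (h₁ : y₁ ≠ y₁') (h₂ : y₂ ≠ y₂')
    (htri : ∀ a ∈ ({y₁, y₁', y₂, y₂'} : Set (EuclideanSpace ℝ (Fin 3))),
      ∀ b ∈ ({y₁, y₁', y₂, y₂'} : Set (EuclideanSpace ℝ (Fin 3))),
      ∀ c ∈ ({y₁, y₁', y₂, y₂'} : Set (EuclideanSpace ℝ (Fin 3))),
        a ≠ b → b ≠ c → a ≠ c → TriSim a b c) :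
    |(inner ℝ ((‖y₁' - y₁‖)⁻¹ • (y₁' - y₁)) ((‖y₂' - y₂‖)⁻¹ • (y₂' - y₂)) : ℝ)|
      ≤ (1 - (1 / 2) * (min (min ‖y₁ - y₂‖ ‖y₁' - y₂‖) (min ‖y₁ - y₂'‖ ‖y₁' - y₂'‖)) ^ 2) *
        min (‖y₁' - y₁‖ / ‖y₂' - y₂‖) (‖y₂' - y₂‖ / ‖y₁' - y₁‖) := by
  have hu : y₁' - y₁ ≠ 0 := sub_ne_zero.mpr (Ne.symm h₁)
  have hv : y₂' - y₂ ≠ 0 := sub_ne_zero.mpr (Ne.symm h₂)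
  have hr0 : (0:ℝ) < ‖y₁' - y₁‖ := norm_pos_iff.mpr hu
  have hs0 : (0:ℝ) < ‖y₂' - y₂‖ := norm_pos_iff.mpr hv
  rw [real_inner_smul_left, real_inner_smul_right, abs_mul, abs_mul, abs_inv, abs_inv,
    abs_of_pos hr0, abs_of_pos hs0]
  by_cases hA : y₁ = y₂ ∧ y₁' = y₂'
  · obtain ⟨e1, e2⟩ := hA
    have q1 : ‖y₁ - y₂‖ = 0 := by rw [e1, sub_self, norm_zero]
    have q2 : ‖y₁' - y₂'‖ = 0 := by rw [e2, sub_self, norm_zero]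
    have dmin : min (min ‖y₁ - y₂‖ ‖y₁' - y₂‖) (min ‖y₁ - y₂'‖ ‖y₁' - y₂'‖) = 0 := by
      rw [q1, q2, min_eq_left (norm_nonneg _), min_eq_right (norm_nonneg _), min_self]
    have hvv : y₂' - y₂ = y₁' - y₁ := by rw [← e1, ← e2]
    rw [dmin, hvv, real_inner_self_eq_norm_sq, div_self hr0.ne', min_self,
      abs_of_nonneg (sq_nonneg _)]
    have hone : ‖y₁' - y₁‖⁻¹ * (‖y₁' - y₁‖⁻¹ * ‖y₁' - y₁‖ ^ 2) = 1 := by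
      rw [pow_two]; field_simp
    rw [hone]; norm_num
  by_cases hB : y₁ = y₂' ∧ y₁' = y₂
  · obtain ⟨e1, e2⟩ := hB
    have q1 : ‖y₁ - y₂'‖ = 0 := by rw [e1, sub_self, norm_zero]
    have dmin : min (min ‖y₁ - y₂‖ ‖y₁' - y₂‖) (min ‖y₁ - y₂'‖ ‖y₁' - y₂'‖) = 0 := by
      rw [q1, min_eq_left (norm_nonneg _),
        min_eq_right (le_min (norm_nonneg _) (norm_nonneg _))]
    have hvv : y₂' - y₂ = -(y₁' - y₁) := by rw [← e1, ← e2]; abel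
    have hs_eq : ‖y₂' - y₂‖ = ‖y₁' - y₁‖ := by rw [hvv, norm_neg]
    rw [dmin, hvv, inner_neg_right, real_inner_self_eq_norm_sq, abs_neg, norm_neg,
      div_self hr0.ne', min_self, abs_of_nonneg (sq_nonneg _)]
    have hone : ‖y₁' - y₁‖⁻¹ * (‖y₁' - y₁‖⁻¹ * ‖y₁' - y₁‖ ^ 2) = 1 := by
      rw [pow_two]; field_simp
    rw [hone]; norm_num
  push_neg at hA hB
  obtain ⟨x, hxS, hx2, hx3⟩ : ∃ x, x ∈ ({y₁, y₁', y₂, y₂'} : Set (EuclideanSpace ℝ (Fin 3)))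
      ∧ x ≠ y₂ ∧ x ≠ y₂' := by
    by_cases e1 : y₁ = y₂
    · exact ⟨y₁', by simp, fun h => h₁ (e1.trans h.symm), hA e1⟩
    by_cases e2 : y₁ = y₂'
    · exact ⟨y₁', by simp, hB e2, fun h => h₁ (e2.trans h.symm)⟩
    · exact ⟨y₁, by simp, e1, e2⟩
  obtain ⟨z, hzS, hz2, hz3⟩ : ∃ z, z ∈ ({y₁, y₁', y₂, y₂'} : Set (EuclideanSpace ℝ (Fin 3)))
      ∧ z ≠ y₁ ∧ z ≠ y₁' := by
    by_cases f1 : y₂ = y₁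
    · exact ⟨y₂', by simp, fun h => h₂ (f1.trans h.symm), fun h => hA f1.symm h.symm⟩
    by_cases f2 : y₂ = y₁'
    · exact ⟨y₂', by simp, fun h => hB h.symm f2.symm, fun h => h₂ (f2.trans h.symm)⟩
    · exact ⟨y₂, by simp, f1, f2⟩
  have m1 : y₁ ∈ ({y₁, y₁', y₂, y₂'} : Set (EuclideanSpace ℝ (Fin 3))) := by simp
  have m1' : y₁' ∈ ({y₁, y₁', y₂, y₂'} : Set (EuclideanSpace ℝ (Fin 3))) := by simp
  have m2 : y₂ ∈ ({y₁, y₁', y₂, y₂'} : Set (EuclideanSpace ℝ (Fin 3))) := by simp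
  have m2' : y₂' ∈ ({y₁, y₁', y₂, y₂'} : Set (EuclideanSpace ℝ (Fin 3))) := by simp
  have hs2 : ‖y₂' - y₂‖ ≤ 2 :=
    norm_le_two' (Ne.symm h₂)
      (htri x hxS y₂' m2' y₂ m2 hx3 (Ne.symm h₂) hx2)
      (htri x hxS y₂ m2 y₂' m2' hx2 h₂ hx3)
      (htri y₂' m2' x hxS y₂ m2 (Ne.symm hx3) hx2 (Ne.symm h₂))
  have hr2 : ‖y₁' - y₁‖ ≤ 2 :=
    norm_le_two' (Ne.symm h₁)
      (htri z hzS y₁' m1' y₁ m1 hz3 (Ne.symm h₁) hz2)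
      (htri z hzS y₁ m1 y₁' m1' hz2 h₁ hz3)
      (htri y₁' m1' z hzS y₁ m1 (Ne.symm hz3) hz2 (Ne.symm h₁))
  have K1 := key hs2 (fun a b => htri y₁ m1 y₂ m2 y₂' m2' a h₂ b)
  have K2 := key hs2 (fun a b => htri y₁' m1' y₂ m2 y₂' m2' a h₂ b)
  have K3 := key' hs2 (fun a b => htri y₁ m1 y₂' m2' y₂ m2 a (Ne.symm h₂) b)
  have K4 := key' hs2 (fun a b => htri y₁' m1' y₂' m2' y₂ m2 a (Ne.symm h₂) b)
  have L1 := key hr2 (fun a b => htri y₂ m2 y₁ m1 y₁' m1' a h₁ b)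
  have L2 := key hr2 (fun a b => htri y₂' m2' y₁ m1 y₁' m1' a h₁ b)
  have L3 := key' hr2 (fun a b => htri y₂ m2 y₁' m1' y₁ m1 a (Ne.symm h₁) b)
  have L4 := key' hr2 (fun a b => htri y₂' m2' y₁' m1' y₁ m1 a (Ne.symm h₁) b)
  rw [norm_sub_rev y₂ y₁] at L1
  rw [norm_sub_rev y₂' y₁] at L2
  rw [norm_sub_rev y₂ y₁'] at L3
  rw [norm_sub_rev y₂' y₁'] at L4
  set d := min (min ‖y₁ - y₂‖ ‖y₁' - y₂‖) (min ‖y₁ - y₂'‖ ‖y₁' - y₂'‖) with hd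
  have hd0 : 0 ≤ d :=
    le_min (le_min (norm_nonneg _) (norm_nonneg _)) (le_min (norm_nonneg _) (norm_nonneg _))
  have hd1 : d ^ 2 ≤ ‖y₁ - y₂‖ ^ 2 :=
    pow_le_pow_left₀ hd0 ((min_le_left _ _).trans (min_le_left _ _)) 2
  have hd2 : d ^ 2 ≤ ‖y₁' - y₂‖ ^ 2 :=
    pow_le_pow_left₀ hd0 ((min_le_left _ _).trans (min_le_right _ _)) 2
  have hd3 : d ^ 2 ≤ ‖y₁ - y₂'‖ ^ 2 :=
    pow_le_pow_left₀ hd0 ((min_le_right _ _).trans (min_le_left _ _)) 2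
  have hd4 : d ^ 2 ≤ ‖y₁' - y₂'‖ ^ 2 :=
    pow_le_pow_left₀ hd0 ((min_le_right _ _).trans (min_le_right _ _)) 2
  have EV1 := inner_expand₁ y₁ y₁' y₂ y₂'
  have EV2 := inner_expand₂ y₁ y₁' y₂ y₂'
  have ER1 := inner_expand₁ y₂ y₂' y₁ y₁'
  have ER2 := inner_expand₂ y₂ y₂' y₁ y₁'
  have comm : (inner ℝ (y₁' - y₁) (y₂' - y₂) : ℝ) = inner ℝ (y₂' - y₂) (y₁' - y₁) :=
    real_inner_comm _ _
  have selfv : (inner ℝ (y₂' - y₂) (y₂' - y₂) : ℝ) = ‖y₂' - y₂‖ ^ 2 :=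
    real_inner_self_eq_norm_sq _
  have selfu : (inner ℝ (y₁' - y₁) (y₁' - y₁) : ℝ) = ‖y₁' - y₁‖ ^ 2 :=
    real_inner_self_eq_norm_sq _
  have habs_s : |(inner ℝ (y₁' - y₁) (y₂' - y₂) : ℝ)| ≤ (1 - 1/2 * d ^ 2) * ‖y₂' - y₂‖ ^ 2 := by
    rw [abs_le]
    constructor
    · linarith [K2, K3, EV2, selfv,
        mul_le_mul_of_nonneg_right hd2 (sq_nonneg ‖y₂' - y₂‖),
        mul_le_mul_of_nonneg_right hd3 (sq_nonneg ‖y₂' - y₂‖)]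
    · linarith [K1, K4, EV1, selfv,
        mul_le_mul_of_nonneg_right hd1 (sq_nonneg ‖y₂' - y₂‖),
        mul_le_mul_of_nonneg_right hd4 (sq_nonneg ‖y₂' - y₂‖)]
  have habs_r : |(inner ℝ (y₁' - y₁) (y₂' - y₂) : ℝ)| ≤ (1 - 1/2 * d ^ 2) * ‖y₁' - y₁‖ ^ 2 := by
    rw [abs_le]
    constructor
    · linarith [L2, L3, ER2, selfu, comm,
        mul_le_mul_of_nonneg_right hd3 (sq_nonneg ‖y₁' - y₁‖),
        mul_le_mul_of_nonneg_right hd2 (sq_nonneg ‖y₁' - y₁‖)]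
    · linarith [L1, L4, ER1, selfu, comm,
        mul_le_mul_of_nonneg_right hd1 (sq_nonneg ‖y₁' - y₁‖),
        mul_le_mul_of_nonneg_right hd4 (sq_nonneg ‖y₁' - y₁‖)]
  rcases le_total ‖y₁' - y₁‖ ‖y₂' - y₂‖ with hle | hle
  · have hmin : min (‖y₁' - y₁‖ / ‖y₂' - y₂‖) (‖y₂' - y₂‖ / ‖y₁' - y₁‖)
        = ‖y₁' - y₁‖ / ‖y₂' - y₂‖ := by
      apply min_eq_left
      rw [div_le_div_iff₀ hs0 hr0]
      nlinarith
    rw [hmin]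
    calc ‖y₁' - y₁‖⁻¹ * (‖y₂' - y₂‖⁻¹ * |(inner ℝ (y₁' - y₁) (y₂' - y₂) : ℝ)|)
        ≤ ‖y₁' - y₁‖⁻¹ * (‖y₂' - y₂‖⁻¹ * ((1 - 1/2 * d ^ 2) * ‖y₁' - y₁‖ ^ 2)) := by
          gcongr
      _ = (1 - 1/2 * d ^ 2) * (‖y₁' - y₁‖ / ‖y₂' - y₂‖) := by
          field_simp
  · have hmin : min (‖y₁' - y₁‖ / ‖y₂' - y₂‖) (‖y₂' - y₂‖ / ‖y₁' - y₁‖)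
        = ‖y₂' - y₂‖ / ‖y₁' - y₁‖ := by
      apply min_eq_right
      rw [div_le_div_iff₀ hr0 hs0]
      nlinarith
    rw [hmin]
    calc ‖y₁' - y₁‖⁻¹ * (‖y₂' - y₂‖⁻¹ * |(inner ℝ (y₁' - y₁) (y₂' - y₂) : ℝ)|)
        ≤ ‖y₁' - y₁‖⁻¹ * (‖y₂' - y₂‖⁻¹ * ((1 - 1/2 * d ^ 2) * ‖y₂' - y₂‖ ^ 2)) := by
          gcongr
      _ = (1 - 1/2 * d ^ 2) * (‖y₂' - y₂‖ / ‖y₁' - y₁‖) := by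
          field_simp
end

section
/- Let Y = {A, B, C, D} be a set of four affinely independent points in ℝ³ such that every angle determined by three of the points is acute, i.e., (P−Q)·(R−Q) > 0 for all pairwise distinct P, Q, R ∈ Y. Then the circumradius satisfies ρ_Y ≤ 2·diam Y. In particular, every four-point similarity embedding Y ⊂ ℝ³ satisfies ρ_Y ≤ 2·diam Y. -/
open Metric

noncomputable section

lemma keypos (s a b c d e f : ℝ)
    (t1 : 0 < a + b - d) (t2 : 0 < b + d - a) (t3 : 0 < d + a - b)
    (t4 : 0 < a + c - e) (t5 : 0 < c + e - a) (t6 : 0 < e + a - c)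
    (t7 : 0 < b + c - f) (t8 : 0 < c + f - b) (t9 : 0 < f + b - c)
    (t10 : 0 < d + e - f) (t11 : 0 < e + f - d) (t12 : 0 < f + d - e)
    (u1 : 0 < s - 4*a) (u2 : 0 < s - 4*b) (u3 : 0 < s - 4*c)
    (u4 : 0 < s - 4*d) (u5 : 0 < s - 4*e) (u6 : 0 < s - 4*f) :
    0 < c^2*d^2 - 2*b*c*d*e + b^2*e^2 - 2*a*c*d*f - 2*a*b*e*f + a^2*f^2 - 4*s*d*e*f + 4*s*c*d*f + 4*s*c*d*e - 4*s*c*d^2 - 4*s*c^2*d + 4*s*b*e*f - 4*s*b*e^2 + 4*s*b*d*e - 4*s*b*c*f + 4*s*b*c*e + 4*s*b*c*d - 4*s*b^2*e - 4*s*a*f^2 + 4*s*a*e*f + 4*s*a*d*f + 4*s*a*c*f - 4*s*a*c*e + 4*s*a*c*d + 4*s*a*b*f + 4*s*a*b*e - 4*s*a*b*d - 4*s*a^2*f := by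
  linarith [mul_pos (mul_pos (mul_pos t1 t1) t5) t12,
    mul_pos (mul_pos (mul_pos t1 t1) t8) t10,
    mul_pos (mul_pos (mul_pos t1 t5) t5) t12,
    mul_pos (mul_pos (mul_pos t1 t5) t12) t12,
    mul_pos (mul_pos (mul_pos t1 t8) t8) t10,
    mul_pos (mul_pos (mul_pos t1 t8) t10) t10,
    mul_pos (mul_pos (mul_pos t2 t2) t4) t11,
    mul_pos (mul_pos (mul_pos t2 t2) t6) t8,
    mul_pos (mul_pos (mul_pos t2 t4) t4) t11,
    mul_pos (mul_pos (mul_pos t2 t4) t11) t11,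
    mul_pos (mul_pos (mul_pos t2 t6) t6) t8,
    mul_pos (mul_pos (mul_pos t2 t6) t8) t8,
    mul_pos (mul_pos (mul_pos t3 t3) t5) t9,
    mul_pos (mul_pos (mul_pos t3 t3) t7) t11,
    mul_pos (mul_pos (mul_pos t3 t5) t5) t9,
    mul_pos (mul_pos (mul_pos t3 t5) t9) t9,
    mul_pos (mul_pos (mul_pos t3 t7) t7) t11,
    mul_pos (mul_pos (mul_pos t3 t7) t11) t11,
    mul_pos (mul_pos (mul_pos t4 t4) t9) t10,
    mul_pos (mul_pos (mul_pos t4 t9) t9) t10,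
    mul_pos (mul_pos (mul_pos t4 t9) t10) t10,
    mul_pos (mul_pos (mul_pos t6 t6) t7) t12,
    mul_pos (mul_pos (mul_pos t6 t7) t7) t12,
    mul_pos (mul_pos (mul_pos t6 t7) t12) t12,
    mul_pos (mul_pos (mul_pos t1 t2) t6) t8,
    mul_pos (mul_pos (mul_pos t1 t2) t8) t10,
    mul_pos (mul_pos (mul_pos t1 t3) t5) t9,
    mul_pos (mul_pos (mul_pos t1 t3) t5) t12,
    mul_pos (mul_pos (mul_pos t1 t5) t6) t12,
    mul_pos (mul_pos (mul_pos t1 t5) t10) t12,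
    mul_pos (mul_pos (mul_pos t1 t8) t9) t10,
    mul_pos (mul_pos (mul_pos t1 t8) t10) t12,
    mul_pos (mul_pos (mul_pos t2 t3) t4) t11,
    mul_pos (mul_pos (mul_pos t2 t3) t7) t11,
    mul_pos (mul_pos (mul_pos t2 t4) t6) t8,
    mul_pos (mul_pos (mul_pos t2 t4) t6) t11,
    mul_pos (mul_pos (mul_pos t2 t4) t10) t11,
    mul_pos (mul_pos (mul_pos t2 t6) t7) t8,
    mul_pos (mul_pos (mul_pos t3 t4) t5) t9,
    mul_pos (mul_pos (mul_pos t3 t5) t7) t9,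
    mul_pos (mul_pos (mul_pos t3 t7) t9) t11,
    mul_pos (mul_pos (mul_pos t3 t7) t11) t12,
    mul_pos (mul_pos (mul_pos t4 t5) t9) t10,
    mul_pos (mul_pos (mul_pos t4 t8) t9) t10,
    mul_pos (mul_pos (mul_pos t4 t9) t10) t11,
    mul_pos (mul_pos (mul_pos t5 t6) t7) t12,
    mul_pos (mul_pos (mul_pos t6 t7) t8) t12,
    mul_pos (mul_pos (mul_pos t6 t7) t11) t12,
    mul_pos (mul_pos (mul_pos t1 t5) t12) u1,
    mul_pos (mul_pos (mul_pos t1 t5) t12) u4,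
    mul_pos (mul_pos (mul_pos t1 t5) t12) u5,
    mul_pos (mul_pos (mul_pos t1 t8) t10) u2,
    mul_pos (mul_pos (mul_pos t1 t8) t10) u4,
    mul_pos (mul_pos (mul_pos t1 t8) t10) u6,
    mul_pos (mul_pos (mul_pos t2 t4) t11) u1,
    mul_pos (mul_pos (mul_pos t2 t4) t11) u4,
    mul_pos (mul_pos (mul_pos t2 t4) t11) u5,
    mul_pos (mul_pos (mul_pos t2 t6) t8) u1,
    mul_pos (mul_pos (mul_pos t2 t6) t8) u2,
    mul_pos (mul_pos (mul_pos t2 t6) t8) u3,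
    mul_pos (mul_pos (mul_pos t3 t5) t9) u1,
    mul_pos (mul_pos (mul_pos t3 t5) t9) u2,
    mul_pos (mul_pos (mul_pos t3 t5) t9) u3,
    mul_pos (mul_pos (mul_pos t3 t7) t11) u2,
    mul_pos (mul_pos (mul_pos t3 t7) t11) u4,
    mul_pos (mul_pos (mul_pos t3 t7) t11) u6,
    mul_pos (mul_pos (mul_pos t4 t9) t10) u3,
    mul_pos (mul_pos (mul_pos t4 t9) t10) u5,
    mul_pos (mul_pos (mul_pos t4 t9) t10) u6,
    mul_pos (mul_pos (mul_pos t6 t7) t12) u3,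
    mul_pos (mul_pos (mul_pos t6 t7) t12) u5,
    mul_pos (mul_pos (mul_pos t6 t7) t12) u6]


local notation "E3" => EuclideanSpace ℝ (Fin 3)

lemma det_fin_four' (M : Matrix (Fin 4) (Fin 4) ℝ) :
    M.det =
      M 0 0 * (M 1 1 * (M 2 2 * M 3 3 - M 2 3 * M 3 2)
        - M 1 2 * (M 2 1 * M 3 3 - M 2 3 * M 3 1)
        + M 1 3 * (M 2 1 * M 3 2 - M 2 2 * M 3 1))
      - M 0 1 * (M 1 0 * (M 2 2 * M 3 3 - M 2 3 * M 3 2)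
        - M 1 2 * (M 2 0 * M 3 3 - M 2 3 * M 3 0)
        + M 1 3 * (M 2 0 * M 3 2 - M 2 2 * M 3 0))
      + M 0 2 * (M 1 0 * (M 2 1 * M 3 3 - M 2 3 * M 3 1)
        - M 1 1 * (M 2 0 * M 3 3 - M 2 3 * M 3 0)
        + M 1 3 * (M 2 0 * M 3 1 - M 2 1 * M 3 0))
      - M 0 3 * (M 1 0 * (M 2 1 * M 3 2 - M 2 2 * M 3 1)
        - M 1 1 * (M 2 0 * M 3 2 - M 2 2 * M 3 0)
        + M 1 2 * (M 2 0 * M 3 1 - M 2 1 * M 3 0)) := by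
  rw [Matrix.det_succ_row_zero]
  simp [Fin.sum_univ_succ, Matrix.det_fin_three, Fin.succAbove,
    show (Fin.succ 2 : Fin 4) = 3 from rfl,
    show (Fin.castSucc 2 : Fin 4) = 2 from rfl,
    show ((if (1 : Fin 4) < Fin.succ 2 then (1 : Fin 4) else 2) = 1) from rfl]
  ring

lemma inner_eq_dist' (x y z : E3) :
    (inner ℝ (x - y) (z - y) : ℝ) = (dist x y ^ 2 + dist z y ^ 2 - dist x z ^ 2) / 2 := by
  have h := @norm_sub_sq_real E3 _ _ (x - y) (z - y)
  have hxz : (x - y) - (z - y) = x - z := by abel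
  rw [hxz] at h
  rw [dist_eq_norm, dist_eq_norm, dist_eq_norm]
  linarith

lemma gram_entry' (cc x y : E3) (ρ : ℝ) (hx : dist cc x = ρ) (hy : dist cc y = ρ) :
    (inner ℝ (x - cc) (y - cc) : ℝ) = ρ^2 - dist x y^2/2 := by
  rw [inner_eq_dist', dist_comm x cc, dist_comm y cc, hx, hy]; ring

lemma main_bound (A B C D cc : E3) (ρ : ℝ)
    (hAB : A ≠ B) (hAC : A ≠ C) (hAD : A ≠ D) (hBC : B ≠ C) (hBD : B ≠ D) (hCD : C ≠ D)
    (hacute : ∀ P ∈ ({A, B, C, D} : Set E3), ∀ Q ∈ ({A, B, C, D} : Set E3),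
      ∀ R ∈ ({A, B, C, D} : Set E3),
        P ≠ Q → Q ≠ R → P ≠ R → (0 : ℝ) < inner ℝ (P - Q) (R - Q))
    (hcA : dist cc A = ρ) (hcB : dist cc B = ρ) (hcC : dist cc C = ρ) (hcD : dist cc D = ρ) :
    ρ ≤ 2 * diam ({A, B, C, D} : Set E3) := by
  set S : Set E3 := {A, B, C, D} with hS
  by_contra hcon
  push_neg at hcon
  have hbdd : Bornology.IsBounded S := (Set.toFinite S).isBounded
  have memA : A ∈ S := by simp [hS]
  have memB : B ∈ S := by simp [hS]
  have memC : C ∈ S := by simp [hS]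
  have memD : D ∈ S := by simp [hS]
  have dAB := dist_le_diam_of_mem hbdd memA memB
  have dAC := dist_le_diam_of_mem hbdd memA memC
  have dAD := dist_le_diam_of_mem hbdd memA memD
  have dBC := dist_le_diam_of_mem hbdd memB memC
  have dBD := dist_le_diam_of_mem hbdd memB memD
  have dCD := dist_le_diam_of_mem hbdd memC memD
  have hdpos : 0 < diam S := lt_of_lt_of_le (dist_pos.mpr hAB) dAB
  have hρ : 0 < ρ := by linarith
  -- bounds 4 * q < ρ^2
  have u1 : 0 < ρ^2 - 4 * dist A B ^ 2 := by nlinarith [dist_nonneg (x := A) (y := B)]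
  have u2 : 0 < ρ^2 - 4 * dist A C ^ 2 := by nlinarith [dist_nonneg (x := A) (y := C)]
  have u3 : 0 < ρ^2 - 4 * dist A D ^ 2 := by nlinarith [dist_nonneg (x := A) (y := D)]
  have u4 : 0 < ρ^2 - 4 * dist B C ^ 2 := by nlinarith [dist_nonneg (x := B) (y := C)]
  have u5 : 0 < ρ^2 - 4 * dist B D ^ 2 := by nlinarith [dist_nonneg (x := B) (y := D)]
  have u6 : 0 < ρ^2 - 4 * dist C D ^ 2 := by nlinarith [dist_nonneg (x := C) (y := D)]
  -- triangle facts
  have tri : ∀ P ∈ S, ∀ Q ∈ S, ∀ R ∈ S, P ≠ Q → Q ≠ R → P ≠ R →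
      0 < dist Q P ^ 2 + dist Q R ^ 2 - dist P R ^ 2 := by
    intro P hP Q hQ R hR h1 h2 h3
    have h := hacute P hP Q hQ R hR h1 h2 h3
    rw [inner_eq_dist'] at h
    rw [dist_comm P Q, dist_comm R Q] at h
    linarith
  have t1 : 0 < dist A B ^ 2 + dist A C ^ 2 - dist B C ^ 2 :=
    tri B memB A memA C memC hAB.symm hAC hBC
  have t2 : 0 < dist A C ^ 2 + dist B C ^ 2 - dist A B ^ 2 := by
    have h := tri A memA C memC B memB hAC hBC.symm hAB
    rw [dist_comm C A, dist_comm C B] at h; linarith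
  have t3 : 0 < dist B C ^ 2 + dist A B ^ 2 - dist A C ^ 2 := by
    have h := tri A memA B memB C memC hAB hBC hAC
    rw [dist_comm B A] at h; linarith
  have t4 : 0 < dist A B ^ 2 + dist A D ^ 2 - dist B D ^ 2 :=
    tri B memB A memA D memD hAB.symm hAD hBD
  have t5 : 0 < dist A D ^ 2 + dist B D ^ 2 - dist A B ^ 2 := by
    have h := tri A memA D memD B memB hAD hBD.symm hAB
    rw [dist_comm D A, dist_comm D B] at h; linarith
  have t6 : 0 < dist B D ^ 2 + dist A B ^ 2 - dist A D ^ 2 := by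
    have h := tri A memA B memB D memD hAB hBD hAD
    rw [dist_comm B A] at h; linarith
  have t7 : 0 < dist A C ^ 2 + dist A D ^ 2 - dist C D ^ 2 :=
    tri C memC A memA D memD hAC.symm hAD hCD
  have t8 : 0 < dist A D ^ 2 + dist C D ^ 2 - dist A C ^ 2 := by
    have h := tri A memA D memD C memC hAD hCD.symm hAC
    rw [dist_comm D A, dist_comm D C] at h; linarith
  have t9 : 0 < dist C D ^ 2 + dist A C ^ 2 - dist A D ^ 2 := by
    have h := tri A memA C memC D memD hAC hCD hAD
    rw [dist_comm C A] at h; linarith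
  have t10 : 0 < dist B C ^ 2 + dist B D ^ 2 - dist C D ^ 2 :=
    tri C memC B memB D memD hBC.symm hBD hCD
  have t11 : 0 < dist B D ^ 2 + dist C D ^ 2 - dist B C ^ 2 := by
    have h := tri B memB D memD C memC hBD hCD.symm hBC
    rw [dist_comm D B, dist_comm D C] at h; linarith
  have t12 : 0 < dist C D ^ 2 + dist B C ^ 2 - dist B D ^ 2 := by
    have h := tri B memB C memC D memD hBC hCD hBD
    rw [dist_comm C B] at h; linarith
  -- linear dependence
  set v : Fin 4 → E3 := ![A - cc, B - cc, C - cc, D - cc] with hv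
  have hv0 : v 0 = A - cc := rfl
  have hv1 : v 1 = B - cc := rfl
  have hv2 : v 2 = C - cc := rfl
  have hv3 : v 3 = D - cc := rfl
  have hnli : ¬ LinearIndependent ℝ v := by
    intro h
    have hcard := h.fintype_card_le_finrank
    rw [finrank_euclideanSpace_fin] at hcard
    simp at hcard
  obtain ⟨g, hgsum, i0, hgi⟩ := Fintype.not_linearIndependent_iff.mp hnli
  set M : Matrix (Fin 4) (Fin 4) ℝ := Matrix.of fun i j : Fin 4 => (inner ℝ (v i) (v j) : ℝ)
    with hM
  have hmul : M.mulVec g = 0 := by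
    funext j
    have hz : (inner ℝ (v j) (∑ i, g i • v i) : ℝ) = 0 := by rw [hgsum]; exact inner_zero_right _
    rw [inner_sum] at hz
    simp only [real_inner_smul_right] at hz
    simp only [Matrix.mulVec, dotProduct, hM, Matrix.of_apply, Pi.zero_apply]
    rw [← hz]
    exact Finset.sum_congr rfl fun k _ => mul_comm _ _
  have hgne : g ≠ 0 := fun h => hgi (by rw [h]; rfl)
  have hdet0 : M.det = 0 := Matrix.exists_mulVec_eq_zero_iff.mp ⟨g, hgne, hmul⟩
  rw [det_fin_four'] at hdet0
  simp only [hM, Matrix.of_apply, hv0, hv1, hv2, hv3] at hdet0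
  rw [gram_entry' cc A A ρ hcA hcA, gram_entry' cc A B ρ hcA hcB, gram_entry' cc A C ρ hcA hcC,
    gram_entry' cc A D ρ hcA hcD, gram_entry' cc B A ρ hcB hcA, gram_entry' cc B B ρ hcB hcB,
    gram_entry' cc B C ρ hcB hcC, gram_entry' cc B D ρ hcB hcD, gram_entry' cc C A ρ hcC hcA,
    gram_entry' cc C B ρ hcC hcB, gram_entry' cc C C ρ hcC hcC, gram_entry' cc C D ρ hcC hcD,
    gram_entry' cc D A ρ hcD hcA, gram_entry' cc D B ρ hcD hcB, gram_entry' cc D C ρ hcD hcC,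
    gram_entry' cc D D ρ hcD hcD] at hdet0
  rw [dist_comm B A, dist_comm C A, dist_comm D A, dist_comm C B, dist_comm D B,
    dist_comm D C] at hdet0
  simp only [dist_self] at hdet0
  have hpos := keypos (ρ^2) (dist A B^2) (dist A C^2) (dist A D^2) (dist B C^2)
    (dist B D^2) (dist C D^2) t1 t2 t3 t4 t5 t6 t7 t8 t9 t10 t11 t12 u1 u2 u3 u4 u5 u6
  linarith [hdet0, hpos]



lemma circum_bound (A B C D : E3)
    (hAB : A ≠ B) (hAC : A ≠ C) (hAD : A ≠ D) (hBC : B ≠ C) (hBD : B ≠ D) (hCD : C ≠ D)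
    (hacute : ∀ P ∈ ({A, B, C, D} : Set E3), ∀ Q ∈ ({A, B, C, D} : Set E3),
      ∀ R ∈ ({A, B, C, D} : Set E3),
        P ≠ Q → Q ≠ R → P ≠ R → (0 : ℝ) < inner ℝ (P - Q) (R - Q)) :
    circumradius ({A, B, C, D} : Set E3) ≤ 2 * diam ({A, B, C, D} : Set E3) := by
  unfold circumradius circumData
  split_ifs with hex
  · obtain ⟨⟨hmem, hdist⟩, hρ0⟩ := hex.choose_spec
    exact main_bound A B C D hex.choose.1 hex.choose.2 hAB hAC hAD hBC hBD hCD hacute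
      (hdist A (by simp)) (hdist B (by simp)) (hdist C (by simp)) (hdist D (by simp))
  · have : (0:ℝ) ≤ 2 * diam ({A, B, C, D} : Set E3) := by
      have := diam_nonneg (s := ({A, B, C, D} : Set E3)); linarith
    simpa using this

/-- If all angles determined by three of the four affinely independent points
`A, B, C, D ∈ ℝ³` are acute, then the circumradius of `{A,B,C,D}` is at most twice the
diameter; in particular this holds for every four-point similarity embedding in `ℝ³`. -/
theorem circumradius_le_two_diam_of_acute
    (A B C D : EuclideanSpace ℝ (Fin 3))
    (hindep : AffineIndependent ℝ ![A, B, C, D])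
    (hacute : ∀ P ∈ ({A, B, C, D} : Set (EuclideanSpace ℝ (Fin 3))),
      ∀ Q ∈ ({A, B, C, D} : Set (EuclideanSpace ℝ (Fin 3))),
      ∀ R ∈ ({A, B, C, D} : Set (EuclideanSpace ℝ (Fin 3))),
        P ≠ Q → Q ≠ R → P ≠ R → (0 : ℝ) < inner ℝ (P - Q) (R - Q)) :
    circumradius ({A, B, C, D} : Set (EuclideanSpace ℝ (Fin 3)))
        ≤ 2 * Metric.diam ({A, B, C, D} : Set (EuclideanSpace ℝ (Fin 3))) ∧
      ∀ Y : Set (EuclideanSpace ℝ (Fin 3)), IsSimEmb Y → Y.ncard = 4 →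
        circumradius Y ≤ 2 * Metric.diam Y := by
  constructor
  · have hinj := hindep.injective
    have hAB : A ≠ B := fun h => by
      have : (0 : Fin 4) = 1 := hinj (by simpa using h); simp at this
    have hAC : A ≠ C := fun h => by
      have : (0 : Fin 4) = 2 := hinj (by simpa using h); simp at this
    have hAD : A ≠ D := fun h => by
      have : (0 : Fin 4) = 3 := hinj (by simpa using h); simp at this
    have hBC : B ≠ C := fun h => by
      have : (1 : Fin 4) = 2 := hinj (by simpa using h); simp at this
    have hBD : B ≠ D := fun h => by
      have : (1 : Fin 4) = 3 := hinj (by simpa using h); simp at this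
    have hCD : C ≠ D := fun h => by
      have : (2 : Fin 4) = 3 := hinj (by simpa using h); simp at this
    exact circum_bound A B C D hAB hAC hAD hBC hBD hCD hacute
  · intro Y hsim hcard
    obtain ⟨hfin, haff, hlt2, hrad, htri⟩ := hsim
    have hYne : Y.Nonempty := Set.nonempty_of_ncard_ne_zero (by rw [hcard]; norm_num)
    obtain ⟨a, ha⟩ := hYne
    have h3 : (Y \ {a}).ncard = 3 := by
      rw [Set.ncard_diff_singleton_of_mem ha, hcard]
    obtain ⟨b, c, d, hbc, hbd, hcd, hY'⟩ := Set.ncard_eq_three.mp h3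
    have hbY : b ∈ Y \ {a} := by rw [hY']; simp
    have hcY : c ∈ Y \ {a} := by rw [hY']; simp
    have hdY : d ∈ Y \ {a} := by rw [hY']; simp
    have hab : a ≠ b := fun h => hbY.2 (by simp [h.symm])
    have hac : a ≠ c := fun h => hcY.2 (by simp [h.symm])
    have had : a ≠ d := fun h => hdY.2 (by simp [h.symm])
    have hYeq : Y = {a, b, c, d} := by
      have h1 : insert a (Y \ {a}) = Y := by
        rw [Set.insert_diff_singleton, Set.insert_eq_of_mem ha]
      rw [← h1, hY']
    have hacute : ∀ P ∈ ({a, b, c, d} : Set (EuclideanSpace ℝ (Fin 3))),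
        ∀ Q ∈ ({a, b, c, d} : Set (EuclideanSpace ℝ (Fin 3))),
        ∀ R ∈ ({a, b, c, d} : Set (EuclideanSpace ℝ (Fin 3))),
        P ≠ Q → Q ≠ R → P ≠ R → (0 : ℝ) < inner ℝ (P - Q) (R - Q) := by
      intro P hP Q hQ R hR hPQ hQR hPR
      rw [← hYeq] at hP hQ hR
      have h := htri P hP Q hQ R hR
      unfold TriSim at h
      have h1 : 0 < ‖P - Q‖ ^ 2 :=
        pow_pos (norm_pos_iff.mpr (sub_ne_zero_of_ne hPQ)) 2
      have h2 : 0 < ‖Q - R‖ ^ 2 :=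
        pow_pos (norm_pos_iff.mpr (sub_ne_zero_of_ne hQR)) 2
      rw [inner_eq_dist' P Q R]
      simp only [dist_eq_norm]
      rw [norm_sub_rev R Q]
      nlinarith [mul_pos h1 h2]
    rw [hYeq]
    exact circum_bound a b c d hab hac had hbc hbd hcd hacute
end
end
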